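/- arXiv:0804.0121 — 5 statements merged into one kernel-verified Lean document; each statement's English description precedes it below -/
import Mathlib

section
/- Let C be a densely defined, positive self-adjoint operator on a separable complex Hilbert space h, let G be a densely defined closable linear operator in h with Dom(C) ⊆ Dom(G), and let (L_k)_{k ∈ ℕ} be linear operators in h with Dom(G) ⊆ Dom(L_k) for every k, such that for every x ∈ Dom(G) the series Σ_{k=1}^∞ ‖L_k x‖² converges and 2 Re⟨x, Gx⟩ + Σ_{k=1}^∞ ‖L_k x‖² = 0. Then there exists a constant K ≥ 0 such that Σ_{k=1}^∞ ‖L_k x‖² ≤ K (‖x‖² + ‖Cx‖²) for every x ∈ Dom(C). -/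
open LinearPMap Filter Topology

section helpers

variable {H : Type*} [NormedAddCommGroup H] [InnerProductSpace ℂ H] [CompleteSpace H]

local notation "⟪" x ", " y "⟫" => @inner ℂ _ _ x y

/-- The graph of the adjoint of a densely defined operator is closed. -/
lemma adjoint_graph_closed (T : H →ₗ.[ℂ] H) (hT : Dense (T.domain : Set H)) :
    IsClosed (T.adjoint.graph : Set (H × H)) := by
  have hset : (T.adjoint.graph : Set (H × H)) =
      ⋂ x : T.domain, {p : H × H | ⟪p.2, (x : H)⟫ = ⟪p.1, T x⟫} := by
    ext p
    simp only [Set.mem_iInter, Set.mem_setOf_eq, SetLike.mem_coe, mem_graph_iff]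
    constructor
    · rintro ⟨y, hy1, hy2⟩ x
      rw [← hy1, ← hy2]
      exact adjoint_isFormalAdjoint hT y x
    · intro h
      have hp1 : p.1 ∈ T.adjoint.domain :=
        mem_adjoint_domain_of_exists _ ⟨p.2, fun x => h x⟩
      exact ⟨⟨p.1, hp1⟩, rfl, adjoint_apply_eq hT _ fun x => h x⟩
  rw [hset]
  exact isClosed_iInter fun x =>
    isClosed_eq (Continuous.inner continuous_snd continuous_const)
      (Continuous.inner continuous_fst continuous_const)

end helpers

/-- second claim of Remark 2. Under the conservativity relation
`2 Re⟨x, Gx⟩ + Σₖ ‖Lₖ x‖² = 0` on `Dom(G)`, with `C` densely defined positive self-adjoint,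
`G` densely defined and closable, `Dom(C) ⊆ Dom(G)` and `Dom(G) ⊆ Dom(Lₖ)`, there is a
constant `K ≥ 0` with `Σₖ ‖Lₖ x‖² ≤ K (‖x‖² + ‖Cx‖²)` for every `x ∈ Dom(C)`. -/
theorem stmt4 {H : Type*} [NormedAddCommGroup H] [InnerProductSpace ℂ H]
    [CompleteSpace H] [TopologicalSpace.SeparableSpace H]
    (C : H →ₗ.[ℂ] H)
    (hCdense : Dense (C.domain : Set H))
    (hCsa : IsSelfAdjoint C)
    (hCpos : ∀ x : C.domain, 0 ≤ (inner ℂ ((x : H)) (C x) : ℂ).re ∧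
      (inner ℂ ((x : H)) (C x) : ℂ).im = 0)
    (G : H →ₗ.[ℂ] H)
    (hGdense : Dense (G.domain : Set H))
    (hGclos : G.IsClosable)
    (hsub : C.domain ≤ G.domain)
    (L : ℕ → (H →ₗ.[ℂ] H))
    (hLsub : ∀ k, G.domain ≤ (L k).domain)
    (hsummable : ∀ x : G.domain, Summable fun k : ℕ => ‖L k ⟨(x : H), hLsub k x.2⟩‖ ^ 2)
    (hcons : ∀ x : G.domain,
      2 * (inner ℂ ((x : H)) (G x) : ℂ).re + ∑' k : ℕ, ‖L k ⟨(x : H), hLsub k x.2⟩‖ ^ 2 = 0) :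
    ∃ K : ℝ, 0 ≤ K ∧ ∀ x : C.domain,
      ∑' k : ℕ, ‖L k ⟨(x : H), hLsub k (hsub x.2)⟩‖ ^ 2
        ≤ K * (‖(x : H)‖ ^ 2 + ‖C x‖ ^ 2) := by
  classical
  -- `C` is closed since it equals its adjoint
  have hCadj : C.adjoint = C := hCsa
  have hCclosed : IsClosed (C.graph : Set (H × H)) := by
    have := adjoint_graph_closed C hCdense
    rwa [hCadj] at this
  haveI : CompleteSpace C.graph := hCclosed.completeSpace_coe
  -- first components of elements of the graph lie in the domain
  have hfst : ∀ p : C.graph, ((p : H × H)).1 ∈ C.domain := by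
    intro p
    obtain ⟨y, hy1, _⟩ := (C.mem_graph_iff).mp p.2
    exact hy1 ▸ y.2
  -- the linear map from the graph of `C` (a Banach space) to `H` given by `G`
  let g : C.graph →ₗ[ℂ] H :=
    { toFun := fun p => G ⟨((p : H × H)).1, hsub (hfst p)⟩
      map_add' := fun p q => by
        exact G.map_add ⟨((p : H × H)).1, hsub (hfst p)⟩ ⟨((q : H × H)).1, hsub (hfst q)⟩
      map_smul' := fun c p => by
        exact G.map_smul c ⟨((p : H × H)).1, hsub (hfst p)⟩ }
  -- continuity by the closed graph theorem, using closability of `G`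
  have hgcont : Continuous g := by
    apply g.continuous_of_seq_closed_graph
    intro u p y hu hgu
    obtain ⟨f', hf'⟩ := hGclos
    have hGle : G ≤ f' :=
      le_of_le_graph (by rw [← hf']; exact Submodule.le_topologicalClosure _)
    have hx₀mem : ((p : H × H)).1 ∈ G.domain := hsub (hfst p)
    have htend1 : Tendsto (fun n => ((u n : H × H)).1) atTop (𝓝 ((p : H × H)).1) := by
      have hc : Continuous fun q : C.graph => ((q : H × H)).1 :=
        continuous_fst.comp continuous_subtype_val
      exact (hc.tendsto p).comp hu
    have hmemcl : (((p : H × H)).1, y) ∈ closure (G.graph : Set (H × H)) := by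
      apply mem_closure_of_tendsto (htend1.prodMk_nhds hgu)
      filter_upwards with n
      exact G.mem_graph ⟨((u n : H × H)).1, hsub (hfst (u n))⟩
    have hmem' : (((p : H × H)).1, y) ∈ f'.graph := by
      rw [← hf']
      rw [← Submodule.topologicalClosure_coe] at hmemcl
      exact hmemcl
    obtain ⟨z, hz1, hz2⟩ := (f'.mem_graph_iff).mp hmem'
    have hzz : G ⟨((p : H × H)).1, hx₀mem⟩ = f' z :=
      hGle.2 (show ((⟨((p : H × H)).1, hx₀mem⟩ : G.domain) : H) = (z : H) from hz1.symm)
    calc y = f' z := hz2.symm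
    _ = G ⟨((p : H × H)).1, hx₀mem⟩ := hzz.symm
    _ = g p := rfl
  let gc : C.graph →L[ℂ] H := ⟨g, hgcont⟩
  refine ⟨3 * ‖gc‖, by positivity, ?_⟩
  intro x
  set x' : G.domain := ⟨(x : H), hsub x.2⟩ with hx'
  have hkey : 2 * (inner ℂ ((x : H)) (G x') : ℂ).re
      + ∑' k : ℕ, ‖L k ⟨(x : H), hLsub k (hsub x.2)⟩‖ ^ 2 = 0 := hcons x'
  have hp : ((x : H), C x) ∈ C.graph := C.mem_graph x
  have hb : ‖G x'‖ ≤ ‖gc‖ * ‖(((x : H), C x) : H × H)‖ :=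
    gc.le_opNorm (⟨((x : H), C x), hp⟩ : C.graph)
  have hnormp : ‖(((x : H), C x) : H × H)‖ = max ‖(x : H)‖ ‖C x‖ := rfl
  have h1 : -(inner ℂ ((x : H)) (G x') : ℂ).re ≤ ‖(x : H)‖ * ‖G x'‖ := by
    have hn : ‖(inner ℂ ((x : H)) (G x') : ℂ)‖ ≤ ‖(x : H)‖ * ‖G x'‖ :=
      norm_inner_le_norm _ _
    have hr : |(inner ℂ ((x : H)) (G x') : ℂ).re| ≤ ‖(inner ℂ ((x : H)) (G x') : ℂ)‖ :=
      Complex.abs_re_le_norm _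
    calc -(inner ℂ ((x : H)) (G x') : ℂ).re ≤ |(inner ℂ ((x : H)) (G x') : ℂ).re| :=
        neg_le_abs _
    _ ≤ ‖(x : H)‖ * ‖G x'‖ := hr.trans hn
  have hmax : max ‖(x : H)‖ ‖C x‖ ≤ ‖(x : H)‖ + ‖C x‖ :=
    max_le (le_add_of_nonneg_right (norm_nonneg _)) (le_add_of_nonneg_left (norm_nonneg _))
  have ha : (0:ℝ) ≤ ‖(x : H)‖ := norm_nonneg _
  have hM : (0:ℝ) ≤ ‖gc‖ := gc.opNorm_nonneg
  have hgn : (0:ℝ) ≤ ‖G x'‖ := norm_nonneg _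
  rw [hnormp] at hb
  nlinarith [mul_nonneg hM (sq_nonneg (‖(x : H)‖ - ‖C x‖)),
    mul_nonneg hM (sq_nonneg ‖C x‖),
    mul_le_mul_of_nonneg_left (hb.trans (mul_le_mul_of_nonneg_left hmax hM)) ha]
end

section
/- Let h be a separable complex Hilbert space with orthonormal basis (e_n)_{n ∈ ℤ₊}, and for each n ∈ ℤ₊ let P_n denote the orthogonal projection of h onto the linear span h_n of e_0, …, e_n. Let C be a densely defined, positive self-adjoint operator on h such that e_n ∈ Dom(C) for every n and sup_{n ∈ ℤ₊} ‖C P_n x‖ ≤ ‖Cx‖ for every x ∈ Dom(C). Then for every x ∈ Dom(C), C P_n x converges to C x in h as n → ∞. -/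
open Filter

/-- The orthogonal projection `Pₙ` of `x` onto the span of `e 0, …, e n` (for an orthonormal
family `e`), viewed as an element of the domain of the operator `C`, assuming each `e n`
belongs to `Dom(C)`. -/
noncomputable def projDom {H : Type*} [NormedAddCommGroup H] [InnerProductSpace ℂ H]
    (C : H →ₗ.[ℂ] H) (e : ℕ → H) (he : ∀ n, e n ∈ C.domain) (n : ℕ) (x : H) : C.domain :=
  ⟨∑ i ∈ Finset.range (n + 1), (inner ℂ (e i) x : ℂ) • e i,
    Submodule.sum_mem _ fun i _ => Submodule.smul_mem _ _ (he i)⟩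

/-- first claim of Remark 3. If `C` is densely defined, positive and
self-adjoint, each basis vector `eₙ` lies in `Dom(C)` (H1.2) and `supₙ ‖C Pₙ x‖ ≤ ‖Cx‖`
for all `x ∈ Dom(C)` (H1.4), then `C Pₙ x → C x` for every `x ∈ Dom(C)`. -/
theorem stmt5 {H : Type*} [NormedAddCommGroup H] [InnerProductSpace ℂ H]
    [CompleteSpace H] [TopologicalSpace.SeparableSpace H]
    (e : HilbertBasis ℕ ℂ H)
    (C : H →ₗ.[ℂ] H)
    (hdense : Dense (C.domain : Set H))
    (hsa : IsSelfAdjoint C)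
    (hpos : ∀ x : C.domain, 0 ≤ (inner ℂ ((x : H)) (C x) : ℂ).re ∧
      (inner ℂ ((x : H)) (C x) : ℂ).im = 0)
    (he : ∀ n, (e n : H) ∈ C.domain)
    (hbound : ∀ (x : H) (hx : x ∈ C.domain) (n : ℕ),
      ‖C (projDom C (fun n => e n) he n x)‖ ≤ ‖C ⟨x, hx⟩‖) :
    ∀ (x : H) (hx : x ∈ C.domain),
      Tendsto (fun n => C (projDom C (fun n => e n) he n x)) atTop (nhds (C ⟨x, hx⟩)) := by
  intro x hx
  set F : ℕ → H := fun n => C (projDom C (fun n => e n) he n x) with hF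
  set L : H := C ⟨x, hx⟩ with hL
  -- symmetry from self-adjointness
  have hsym : ∀ u v : C.domain, (inner ℂ (C u) (v : H) : ℂ) = inner ℂ (u : H) (C v) := by
    have h := C.adjoint_isFormalAdjoint hdense
    have heq : C.adjoint = C := hsa
    rw [heq] at h
    exact h
  -- Pₙ x → x
  have hP : Tendsto (fun n => ((projDom C (fun n => e n) he n x : C.domain) : H))
      atTop (nhds x) := by
    have h1 : HasSum (fun i => (inner ℂ (e i : H) x : ℂ) • (e i : H)) x := by
      simpa [HilbertBasis.repr_apply_apply] using e.hasSum_repr x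
    have h2 := h1.tendsto_sum_nat
    have h3 := h2.comp (tendsto_add_atTop_nat 1)
    exact h3
  have hb : ∀ n, ‖F n‖ ≤ ‖L‖ := hbound x hx
  -- weak convergence against vectors in the domain
  have hweak : ∀ w : C.domain,
      Tendsto (fun n => (inner ℂ (w : H) (F n) : ℂ)) atTop (nhds (inner ℂ (w : H) L)) := by
    intro w
    have key : ∀ n, (inner ℂ (w : H) (F n) : ℂ)
        = inner ℂ (C w) ((projDom C (fun n => e n) he n x : C.domain) : H) := fun n =>
      (hsym w _).symm
    have h1 : Tendsto (fun n => (inner ℂ (C w)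
        ((projDom C (fun n => e n) he n x : C.domain) : H) : ℂ)) atTop
        (nhds (inner ℂ (C w) x)) := tendsto_const_nhds.inner hP
    have h2 : (inner ℂ (C w) x : ℂ) = inner ℂ (w : H) L := by
      have := hsym w ⟨x, hx⟩
      simpa using this
    simpa [key, h2] using h1
  -- convergence of ⟪L, F n⟫ to ⟪L, L⟫
  have hLF : Tendsto (fun n => (inner ℂ L (F n) : ℂ)) atTop (nhds (inner ℂ L L)) := by
    rw [Metric.tendsto_atTop]
    intro ε hε
    have hLpos : (0 : ℝ) < ‖L‖ + 1 := by positivity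
    have hδ : (0 : ℝ) < ε / (4 * (‖L‖ + 1)) := by positivity
    obtain ⟨w, hwmem, hwL⟩ := hdense.exists_dist_lt L hδ
    have hweakw := hweak ⟨w, hwmem⟩
    rw [Metric.tendsto_atTop] at hweakw
    obtain ⟨N, hN⟩ := hweakw (ε / 2) (by positivity)
    refine ⟨N, fun n hn => ?_⟩
    have h1 : (inner ℂ L (F n) : ℂ) - inner ℂ L L
        = inner ℂ (L - w) (F n - L) + (inner ℂ w (F n) - inner ℂ w L) := by
      simp [inner_sub_left, inner_sub_right]
      ring
    have h2 : ‖(inner ℂ (L - w) (F n - L) : ℂ)‖ ≤ ε / 2 := by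
      calc ‖(inner ℂ (L - w) (F n - L) : ℂ)‖ ≤ ‖L - w‖ * ‖F n - L‖ := norm_inner_le_norm _ _
        _ ≤ (ε / (4 * (‖L‖ + 1))) * (2 * (‖L‖ + 1)) := by
            apply mul_le_mul
            · rw [← dist_eq_norm]; exact hwL.le
            · calc ‖F n - L‖ ≤ ‖F n‖ + ‖L‖ := norm_sub_le _ _
                _ ≤ ‖L‖ + ‖L‖ := by linarith [hb n]
                _ ≤ 2 * (‖L‖ + 1) := by linarith
            · positivity
            · positivity
        _ = ε / 2 := by field_simp; ring
    have h3 : ‖(inner ℂ w (F n) : ℂ) - inner ℂ w L‖ < ε / 2 := by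
      have := hN n hn
      simpa [dist_eq_norm] using this
    rw [dist_eq_norm, h1]
    calc ‖(inner ℂ (L - w) (F n - L) : ℂ) + ((inner ℂ w (F n) : ℂ) - inner ℂ w L)‖
        ≤ ‖(inner ℂ (L - w) (F n - L) : ℂ)‖ + ‖(inner ℂ w (F n) : ℂ) - inner ℂ w L‖ :=
          norm_add_le _ _
      _ < ε / 2 + ε / 2 := by
          apply add_lt_add_of_le_of_lt h2 h3
      _ = ε := by ring
  -- norm-squared estimate and squeeze
  have hineq : ∀ n, ‖F n - L‖ ^ 2 ≤ 2 * ‖L‖ ^ 2 - 2 * (inner ℂ L (F n) : ℂ).re := by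
    intro n
    have hexp : ‖F n - L‖ ^ 2
        = ‖F n‖ ^ 2 - 2 * (inner ℂ (F n) L : ℂ).re + ‖L‖ ^ 2 := by
      exact norm_sub_sq (𝕜 := ℂ) _ _
    have hre : (inner ℂ (F n) L : ℂ).re = (inner ℂ L (F n) : ℂ).re := by
      exact inner_re_symm (𝕜 := ℂ) _ _
    have hFL : ‖F n‖ ^ 2 ≤ ‖L‖ ^ 2 := by
      have := hb n
      nlinarith [norm_nonneg (F n), norm_nonneg L]
    rw [hexp, hre]
    linarith
  have hg : Tendsto (fun n => 2 * ‖L‖ ^ 2 - 2 * (inner ℂ L (F n) : ℂ).re) atTop (nhds 0) := by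
    have hre : Tendsto (fun n => (inner ℂ L (F n) : ℂ).re) atTop (nhds ((inner ℂ L L : ℂ).re)) :=
      (Complex.continuous_re.tendsto _).comp hLF
    have hLL : ((inner ℂ L L : ℂ)).re = ‖L‖ ^ 2 := by
      simpa using inner_self_eq_norm_sq (𝕜 := ℂ) L
    have := (tendsto_const_nhds (x := 2 * ‖L‖ ^ 2)).sub (hre.const_mul 2)
    rw [hLL] at this
    simpa using this
  have hsq : Tendsto (fun n => ‖F n - L‖ ^ 2) atTop (nhds 0) :=
    squeeze_zero (fun n => sq_nonneg _) hineq hg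
  have hnrm : Tendsto (fun n => ‖F n - L‖) atTop (nhds 0) := by
    have := (Real.continuous_sqrt.tendsto 0).comp hsq
    simpa [Function.comp_def, Real.sqrt_sq (norm_nonneg _)] using this
  rw [tendsto_iff_norm_sub_tendsto_zero]
  exact hnrm
end

section
/- Let h be a separable complex Hilbert space with orthonormal basis (e_n)_{n ∈ ℤ₊}, and for each n ∈ ℤ₊ let P_n denote the orthogonal projection of h onto the linear span h_n of e_0, …, e_n. Let C be a densely defined, positive self-adjoint operator on h such that e_n ∈ Dom(C) for every n and sup_{n ∈ ℤ₊} ‖C P_n x‖ ≤ ‖Cx‖ for every x ∈ Dom(C). Then Dom(C) = {x ∈ h : the sequence (C P_n x)_{n ∈ ℤ₊} converges in h}. -/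
open Filter

/-- second claim of Remark 3. If `C` is densely defined, positive and
self-adjoint, each basis vector `eₙ` lies in `Dom(C)` (H1.2) and `supₙ ‖C Pₙ x‖ ≤ ‖Cx‖`
for all `x ∈ Dom(C)` (H1.4), then `Dom(C)` consists exactly of those `x ∈ H` for which
the sequence `(C Pₙ x)ₙ` converges in `H`. -/
theorem stmt6 {H : Type*} [NormedAddCommGroup H] [InnerProductSpace ℂ H]
    [CompleteSpace H] [TopologicalSpace.SeparableSpace H]
    (e : HilbertBasis ℕ ℂ H)
    (C : H →ₗ.[ℂ] H)
    (hdense : Dense (C.domain : Set H))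
    (hsa : IsSelfAdjoint C)
    (hpos : ∀ x : C.domain, 0 ≤ (inner ℂ ((x : H)) (C x) : ℂ).re ∧
      (inner ℂ ((x : H)) (C x) : ℂ).im = 0)
    (he : ∀ n, (e n : H) ∈ C.domain)
    (hbound : ∀ (x : H) (hx : x ∈ C.domain) (n : ℕ),
      ‖C (projDom C (fun n => e n) he n x)‖ ≤ ‖C ⟨x, hx⟩‖) :
    ∀ x : H, x ∈ C.domain ↔
      ∃ y : H, Tendsto (fun n => C (projDom C (fun n => e n) he n x)) atTop (nhds y) := by
  have hsa' : C.adjoint = C := hsa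
  -- symmetry of C
  have hsym : ∀ u v : C.domain, (inner ℂ (C u) ((v : H)) : ℂ) = inner ℂ ((u : H)) (C v) := by
    have h := LinearPMap.adjoint_isFormalAdjoint hdense (T := C)
    rw [hsa'] at h
    exact h
  -- convergence of the projections
  have hP : ∀ x : H,
      Tendsto (fun n => ((projDom C (fun n => e n) he n x : C.domain) : H)) atTop (nhds x) := by
    intro x
    have h1 : HasSum (fun i => (inner ℂ (e i) x : ℂ) • (e i : H)) x := by
      simpa [e.repr_apply_apply] using e.hasSum_repr x
    have h2 := h1.tendsto_sum_nat.comp (tendsto_add_atTop_nat 1)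
    simpa [projDom, Function.comp_def] using h2
  intro x
  constructor
  · -- forward direction
    intro hx
    set y : H := C ⟨x, hx⟩ with hy
    set u : ℕ → H := fun n => C (projDom C (fun n => e n) he n x) with hu
    refine ⟨y, ?_⟩
    have hb : ∀ n, ‖u n‖ ≤ ‖y‖ := hbound x hx
    -- weak convergence tested against elements of the domain
    have hweakD : ∀ z : C.domain,
        Tendsto (fun n => (inner ℂ ((z : H)) (u n) : ℂ)) atTop (nhds (inner ℂ ((z : H)) y)) := by
      intro z
      have h1 : Tendsto (fun n => (inner ℂ (C z) ((projDom C (fun n => e n) he n x : H)) : ℂ))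
          atTop (nhds (inner ℂ (C z) x)) := tendsto_const_nhds.inner (hP x)
      have h2 : ∀ n, (inner ℂ (C z) ((projDom C (fun n => e n) he n x : H)) : ℂ)
          = inner ℂ ((z : H)) (u n) := fun n => hsym z _
      have h3 : (inner ℂ (C z) x : ℂ) = inner ℂ ((z : H)) y := hsym z ⟨x, hx⟩
      rw [← h3]
      exact h1.congr h2
    -- weak convergence tested against y, via density and the uniform bound
    have hweak : Tendsto (fun n => (inner ℂ y (u n) : ℂ)) atTop (nhds (inner ℂ y y)) := by
      rw [Metric.tendsto_atTop]
      intro ε hε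
      have hδ : (0:ℝ) < ε / (4 * (‖y‖ + 1)) := by positivity
      obtain ⟨z, hzmem, hz⟩ := hdense.exists_dist_lt y hδ
      rw [dist_eq_norm] at hz
      obtain ⟨N, hN⟩ := (Metric.tendsto_atTop.mp (hweakD ⟨z, hzmem⟩)) (ε / 2) (by linarith)
      refine ⟨N, fun n hn => ?_⟩
      have key : ∀ w : H, ‖(inner ℂ (y - z) w : ℂ)‖ ≤ ε / (4 * (‖y‖ + 1)) * ‖w‖ := by
        intro w
        calc ‖(inner ℂ (y - z) w : ℂ)‖ ≤ ‖y - z‖ * ‖w‖ := norm_inner_le_norm _ _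
          _ ≤ ε / (4 * (‖y‖ + 1)) * ‖w‖ :=
            mul_le_mul_of_nonneg_right hz.le (norm_nonneg _)
      have hyb : ε / (4 * (‖y‖ + 1)) * ‖y‖ < ε / 4 := by
        rw [div_mul_eq_mul_div, div_lt_iff₀ (by positivity)]
        have : ε * ‖y‖ < ε * (‖y‖ + 1) := by nlinarith [norm_nonneg y]
        calc ε * ‖y‖ < ε * (‖y‖ + 1) := this
          _ ≤ ε / 4 * (4 * (‖y‖ + 1)) := by ring_nf; nlinarith [norm_nonneg y]
      have e1 : ‖(inner ℂ (y - z) (u n) : ℂ)‖ < ε / 4 := by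
        calc ‖(inner ℂ (y - z) (u n) : ℂ)‖ ≤ ε / (4 * (‖y‖ + 1)) * ‖u n‖ := key _
          _ ≤ ε / (4 * (‖y‖ + 1)) * ‖y‖ :=
            mul_le_mul_of_nonneg_left (hb n) (by positivity)
          _ < ε / 4 := hyb
      have e2 : ‖(inner ℂ (y - z) y : ℂ)‖ < ε / 4 := by
        calc ‖(inner ℂ (y - z) y : ℂ)‖ ≤ ε / (4 * (‖y‖ + 1)) * ‖y‖ := key _
          _ < ε / 4 := hyb
      have e3 : dist (inner ℂ (z : H) (u n) : ℂ) (inner ℂ (z : H) y) < ε / 2 := hN n hn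
      have split1 : (inner ℂ y (u n) : ℂ) - inner ℂ y y =
          (inner ℂ (y - z) (u n) : ℂ) + ((inner ℂ (z : H) (u n) : ℂ) - inner ℂ (z : H) y)
          - inner ℂ (y - z) y := by
        simp only [inner_sub_left]
        ring
      calc dist (inner ℂ y (u n) : ℂ) (inner ℂ y y)
          = ‖(inner ℂ y (u n) : ℂ) - inner ℂ y y‖ := dist_eq_norm _ _
        _ = ‖(inner ℂ (y - z) (u n) : ℂ) + ((inner ℂ (z : H) (u n) : ℂ) - inner ℂ (z : H) y)
            - inner ℂ (y - z) y‖ := by rw [split1]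
        _ ≤ ‖(inner ℂ (y - z) (u n) : ℂ)‖ + ‖(inner ℂ (z : H) (u n) : ℂ) - inner ℂ (z : H) y‖
            + ‖(inner ℂ (y - z) y : ℂ)‖ := norm_sub_le_of_le (norm_add_le _ _) le_rfl
        _ < ε / 4 + ε / 2 + ε / 4 := by
            have := e3; rw [dist_eq_norm] at this
            exact add_lt_add (add_lt_add e1 this) e2
        _ = ε := by ring
    -- strong convergence from the weak convergence and the norm bound
    have hre : Tendsto (fun n => ((inner ℂ y (u n) : ℂ)).re) atTop (nhds (‖y‖ ^ 2)) := by
      have h0 : ((inner ℂ y y : ℂ)).re = ‖y‖ ^ 2 := inner_self_eq_norm_sq (𝕜 := ℂ) y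
      rw [← h0]
      exact (Complex.continuous_re.tendsto _).comp hweak
    have hub : Tendsto (fun n => 2 * ‖y‖ ^ 2 - 2 * ((inner ℂ y (u n) : ℂ)).re) atTop (nhds 0) := by
      have h := (tendsto_const_nhds (x := (2 : ℝ) * ‖y‖ ^ 2)).sub (hre.const_mul 2)
      simpa using h
    have hle : ∀ n, ‖u n - y‖ ^ 2 ≤ 2 * ‖y‖ ^ 2 - 2 * ((inner ℂ y (u n) : ℂ)).re := by
      intro n
      have h1 : ‖u n - y‖ ^ 2 = ‖u n‖ ^ 2 - 2 * ((inner ℂ (u n) y : ℂ)).re + ‖y‖ ^ 2 :=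
        norm_sub_sq (𝕜 := ℂ) _ _
      have h2 : ((inner ℂ (u n) y : ℂ)).re = ((inner ℂ y (u n) : ℂ)).re :=
        inner_re_symm (𝕜 := ℂ) _ _
      have h3 : ‖u n‖ ^ 2 ≤ ‖y‖ ^ 2 := by
        have := hb n
        nlinarith [norm_nonneg (u n), norm_nonneg y]
      rw [h1, h2]
      linarith
    have hsq : Tendsto (fun n => ‖u n - y‖ ^ 2) atTop (nhds 0) :=
      squeeze_zero (fun n => sq_nonneg _) hle hub
    have hnorm : Tendsto (fun n => ‖u n - y‖) atTop (nhds 0) := by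
      have heq : (fun n => ‖u n - y‖) = (fun t => Real.sqrt t) ∘ fun n => ‖u n - y‖ ^ 2 := by
        funext n; simp [Real.sqrt_sq (norm_nonneg _)]
      rw [heq]
      simpa using (Real.continuous_sqrt.tendsto 0).comp hsq
    exact tendsto_iff_norm_sub_tendsto_zero.mpr hnorm
  · -- reverse direction: closedness of C
    rintro ⟨y, hy⟩
    rw [← hsa']
    apply LinearPMap.mem_adjoint_domain_of_exists
    refine ⟨y, fun v => ?_⟩
    have l1 : Tendsto (fun n => (inner ℂ (C (projDom C (fun n => e n) he n x)) ((v : H)) : ℂ))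
        atTop (nhds (inner ℂ y (v : H))) := hy.inner tendsto_const_nhds
    have l2 : ∀ n, (inner ℂ (C (projDom C (fun n => e n) he n x)) ((v : H)) : ℂ)
        = inner ℂ ((projDom C (fun n => e n) he n x : H)) (C v) := fun n => hsym _ v
    have l3 : Tendsto (fun n => (inner ℂ ((projDom C (fun n => e n) he n x : H)) (C v) : ℂ))
        atTop (nhds (inner ℂ x (C v))) := (hP x).inner tendsto_const_nhds
    exact tendsto_nhds_unique (l1.congr l2) l3
end

section
/- Fix a natural number p ≥ 4, real numbers β₁, β₂, β₃ and complex numbers α₁, …, α₆ with |α₄| > |α₅|. Then for every α ∈ (0, 4p(|α₄|² − |α₅|²)) there exist β ∈ [0, ∞) and N₀ ∈ ℤ₊ such that for every n ≥ N₀ and every x ∈ h_n: 2 Re⟨N^p x, N^p P_n G x⟩ + Σ_{k=1}^{6} ‖N^p P_n L_k x‖² ≤ −α ‖N^p x‖² + β (1 + ‖x‖²). -/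
noncomputable section

namespace QOsc

/-- The annihilation operator `a` in coordinates: `a e_j = √j e_{j-1}`. -/
def ann (f : ℕ → ℂ) : ℕ → ℂ := fun j => (Real.sqrt (j + 1) : ℂ) * f (j + 1)

/-- The creation operator `a†` in coordinates: `a† e_j = √(j+1) e_{j+1}`. -/
def cre (f : ℕ → ℂ) : ℕ → ℂ := fun j => if j = 0 then 0 else (Real.sqrt j : ℂ) * f (j - 1)

/-- The number operator `N = a† a`. -/
def num (f : ℕ → ℂ) : ℕ → ℂ := fun j => (j : ℂ) * f j

/-- The power `N^p` of the number operator. -/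
def numPow (p : ℕ) (f : ℕ → ℂ) : ℕ → ℂ := fun j => (j : ℂ) ^ p * f j

/-- The orthogonal projection `P_n` onto the span `h_n` of `e_0, …, e_n`. -/
def proj (n : ℕ) (f : ℕ → ℂ) : ℕ → ℂ := fun j => if j ≤ n then f j else 0

/-- The inner product `⟨f, g⟩ = Σ_j conj (f_j) g_j` (linear in the second variable). -/
def innerSeq (f g : ℕ → ℂ) : ℂ := ∑' j : ℕ, (starRingEnd ℂ) (f j) * g j

/-- The squared norm `‖f‖² = Σ_j |f_j|²`. -/
def normSq (f : ℕ → ℂ) : ℝ := ∑' j : ℕ, ‖f j‖ ^ 2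

/-- The Hamiltonian `H = iβ₁(a† − a) + β₂ N + β₃ (a†)² a²`. -/
def Ham (b1 b2 b3 : ℝ) (f : ℕ → ℂ) : ℕ → ℂ :=
  (Complex.I * (b1 : ℂ)) • (cre f - ann f) + (b2 : ℂ) • num f
    + (b3 : ℂ) • cre (cre (ann (ann f)))

/-- The effective Hamiltonian
`G = −iH − ½(|α₁|² a† a + |α₂|² a a† + |α₃|² N² + |α₄|² (a†)² a² + |α₅|² a² (a†)² + |α₆|² N⁴)`. -/
def Gop (b1 b2 b3 : ℝ) (a1 a2 a3 a4 a5 a6 : ℂ) (f : ℕ → ℂ) : ℕ → ℂ :=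
  (-Complex.I) • Ham b1 b2 b3 f
    - (1 / 2 : ℂ) •
      (((‖a1‖ ^ 2 : ℝ) : ℂ) • cre (ann f) + ((‖a2‖ ^ 2 : ℝ) : ℂ) • ann (cre f)
        + ((‖a3‖ ^ 2 : ℝ) : ℂ) • num (num f)
        + ((‖a4‖ ^ 2 : ℝ) : ℂ) • cre (cre (ann (ann f)))
        + ((‖a5‖ ^ 2 : ℝ) : ℂ) • ann (ann (cre (cre f)))
        + ((‖a6‖ ^ 2 : ℝ) : ℂ) • num (num (num (num f))))

-- HELPERS START
set_option maxHeartbeats 1600000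

open Finset in
/-- upper MVT bound -/
lemma pow_sub_pow_le' {a b : ℝ} (hb : 0 ≤ b) (hab : b ≤ a) (m : ℕ) :
    a ^ m - b ^ m ≤ (m : ℝ) * a ^ (m - 1) * (a - b) := by
  have ha : 0 ≤ a := hb.trans hab
  rw [← geom_sum₂_mul a b m]
  have h1 : ∑ i ∈ range m, a ^ i * b ^ (m - 1 - i) ≤ (m : ℝ) * a ^ (m - 1) := by
    calc ∑ i ∈ range m, a ^ i * b ^ (m - 1 - i)
        ≤ ∑ _i ∈ range m, a ^ (m - 1) := by
          refine sum_le_sum fun i hi => ?_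
          have hi' : i < m := mem_range.mp hi
          have h2 : a ^ i * b ^ (m - 1 - i) ≤ a ^ i * a ^ (m - 1 - i) :=
            mul_le_mul_of_nonneg_left (pow_le_pow_left₀ hb hab _) (pow_nonneg ha _)
          refine h2.trans ?_
          rw [← pow_add]
          have h3 : i + (m - 1 - i) = m - 1 := by omega
          rw [h3]
      _ = (m : ℝ) * a ^ (m - 1) := by rw [sum_const, card_range, nsmul_eq_mul]
  exact mul_le_mul_of_nonneg_right h1 (sub_nonneg.mpr hab)

open Finset in
/-- lower MVT bound -/
lemma le_pow_sub_pow {a b : ℝ} (hb : 0 ≤ b) (hab : b ≤ a) (m : ℕ) :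
    (m : ℝ) * b ^ (m - 1) * (a - b) ≤ a ^ m - b ^ m := by
  rw [← geom_sum₂_mul a b m]
  have h1 : (m : ℝ) * b ^ (m - 1) ≤ ∑ i ∈ range m, a ^ i * b ^ (m - 1 - i) := by
    calc (m : ℝ) * b ^ (m - 1) = ∑ _i ∈ range m, b ^ (m - 1) := by
          rw [sum_const, card_range, nsmul_eq_mul]
      _ ≤ ∑ i ∈ range m, a ^ i * b ^ (m - 1 - i) := by
          refine sum_le_sum fun i hi => ?_
          have hi' : i < m := mem_range.mp hi
          have h2 : b ^ i * b ^ (m - 1 - i) ≤ a ^ i * b ^ (m - 1 - i) :=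
            mul_le_mul_of_nonneg_right (pow_le_pow_left₀ hb hab _) (pow_nonneg hb _)
          refine le_trans ?_ h2
          rw [← pow_add]
          have h3 : i + (m - 1 - i) = m - 1 := by omega
          rw [h3]
  exact mul_le_mul_of_nonneg_right h1 (sub_nonneg.mpr hab)

lemma sqrt_le_self' {x : ℝ} (hx : 1 ≤ x) : Real.sqrt x ≤ x := by
  nlinarith [Real.sq_sqrt (by linarith : (0:ℝ) ≤ x), Real.sqrt_nonneg x]

open Finset in
lemma sum_shift_one (m : ℕ) (f : ℕ → ℝ) (h0 : f 0 = 0) :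
    ∑ j ∈ range (m + 1), f j = ∑ k ∈ range m, f (k + 1) := by
  rw [Finset.sum_range_succ']; simp [h0]

open Finset in
lemma sum_shift_up (n d : ℕ) (u w : ℕ → ℝ) (hw : ∀ j, n < j → w j = 0) :
    ∑ j ∈ range (n + 1), u j * w (j + d)
      = ∑ j ∈ range (n + 1), (if d ≤ j then u (j - d) else 0) * w j := by
  have h1 : ∑ j ∈ Finset.Ico d (n + 1 + d), (if d ≤ j then u (j - d) else 0) * w j
      = ∑ j ∈ range (n + 1), u j * w (j + d) := by
    rw [Finset.sum_Ico_eq_sum_range]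
    have e : n + 1 + d - d = n + 1 := by omega
    rw [e]
    refine Finset.sum_congr rfl fun i _ => ?_
    rw [if_pos (Nat.le_add_right d i)]
    have e2 : d + i - d = i := by omega
    have e3 : d + i = i + d := by omega
    rw [e2, e3]
  rw [← h1]
  have h2 : ∑ j ∈ Finset.Ico 0 d, (if d ≤ j then u (j - d) else 0) * w j = 0 := by
    refine Finset.sum_eq_zero fun j hj => ?_
    rw [if_neg, zero_mul]
    have := (Finset.mem_Ico.mp hj).2
    omega
  have h3 : ∑ j ∈ range (n + 1 + d), (if d ≤ j then u (j - d) else 0) * w j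
      = ∑ j ∈ Finset.Ico d (n + 1 + d), (if d ≤ j then u (j - d) else 0) * w j := by
    rw [range_eq_Ico, ← Finset.sum_Ico_consecutive _ (Nat.zero_le d) (by omega : d ≤ n + 1 + d),
      h2, zero_add]
  have h4 : ∑ j ∈ range (n + 1 + d), (if d ≤ j then u (j - d) else 0) * w j
      = ∑ j ∈ range (n + 1), (if d ≤ j then u (j - d) else 0) * w j := by
    refine (Finset.sum_subset (Finset.range_subset_range.mpr (by omega)) fun j _ hj => ?_).symm
    have : n < j := by simp only [Finset.mem_range, not_lt] at hj; omega
    rw [hw j this, mul_zero]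
  rw [← h3, h4]

open Finset in
lemma sum_shift_down (m d : ℕ) (v w : ℕ → ℝ) (hdm : d ≤ m) (hv0 : ∀ j, j < d → v j = 0)
    (hv : ∀ j, 0 ≤ v j) (hw : ∀ j, 0 ≤ w j) :
    ∑ j ∈ range m, v j * w (j - d) ≤ ∑ j ∈ range m, v (j + d) * w j := by
  have h2 : ∑ j ∈ Finset.Ico 0 d, v j * w (j - d) = 0 :=
    Finset.sum_eq_zero fun j hj => by rw [hv0 j (Finset.mem_Ico.mp hj).2, zero_mul]
  have h1 : ∑ j ∈ range m, v j * w (j - d) = ∑ j ∈ Finset.Ico d m, v j * w (j - d) := by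
    rw [range_eq_Ico, ← Finset.sum_Ico_consecutive _ (Nat.zero_le d) hdm, h2, zero_add]
  rw [h1, Finset.sum_Ico_eq_sum_range]
  calc ∑ i ∈ range (m - d), v (d + i) * w (d + i - d)
      = ∑ i ∈ range (m - d), v (i + d) * w i := by
        refine Finset.sum_congr rfl fun i _ => ?_
        have e2 : d + i - d = i := by omega
        have e3 : d + i = i + d := by omega
        rw [e2, e3]
    _ ≤ ∑ i ∈ range m, v (i + d) * w i := by
        refine Finset.sum_le_sum_of_subset_of_nonneg (Finset.range_subset_range.mpr (by omega)) ?_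
        intro i _ _
        exact mul_nonneg (hv _) (hw _)

lemma sqsq (t : ℝ) (ht : 0 ≤ t) : (Real.sqrt t : ℂ) * (Real.sqrt t : ℂ) = (t : ℂ) := by
  rw [← Complex.ofReal_mul, Real.mul_self_sqrt ht]

lemma creAnn (f : ℕ → ℂ) (j : ℕ) : cre (ann f) j = (j : ℂ) * f j := by
  rcases Nat.eq_zero_or_pos j with h | h
  · subst h; simp [cre, ann]
  · obtain ⟨k, rfl⟩ : ∃ k, j = k + 1 := ⟨j - 1, by omega⟩
    simp only [cre, ann, if_neg (Nat.succ_ne_zero k), Nat.add_sub_cancel]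
    have e : ((k + 1 : ℕ) : ℝ) = (k : ℝ) + 1 := by push_cast; ring
    rw [e, ← mul_assoc, sqsq _ (by positivity)]
    push_cast; ring

lemma annCre (f : ℕ → ℂ) (j : ℕ) : ann (cre f) j = ((j : ℂ) + 1) * f j := by
  simp only [ann, cre, if_neg (Nat.succ_ne_zero j), Nat.add_sub_cancel]
  have e : ((j + 1 : ℕ) : ℝ) = (j : ℝ) + 1 := by push_cast; ring
  rw [e, ← mul_assoc, sqsq _ (by positivity)]
  push_cast; ring

lemma cre2ann2 (f : ℕ → ℂ) (j : ℕ) :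
    cre (cre (ann (ann f))) j = (j : ℂ) * ((j : ℂ) - 1) * f j := by
  rcases Nat.lt_or_ge j 2 with h | h
  · interval_cases j <;> simp [cre, ann] <;> ring
  · obtain ⟨k, rfl⟩ : ∃ k, j = k + 2 := ⟨j - 2, by omega⟩
    simp only [cre, ann, if_neg (by omega : ¬ k + 2 = 0), if_neg (by omega : ¬ k + 2 - 1 = 0)]
    have e1 : k + 2 - 1 = k + 1 := by omega
    have e2 : k + 1 - 1 = k := by omega
    have e3 : ((k + 2 : ℕ) : ℝ) = (k : ℝ) + 2 := by push_cast; ring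
    have e4 : ((k + 1 : ℕ) : ℝ) = (k : ℝ) + 1 := by push_cast; ring
    have e6 : (k : ℝ) + 1 + 1 = (k : ℝ) + 2 := by ring
    have e7 : k + 1 + 1 = k + 2 := by omega
    rw [e1, e2, e3, e4, e6, e7]
    calc (Real.sqrt ((k:ℝ) + 2) : ℂ) * ((Real.sqrt ((k:ℝ) + 1) : ℂ) *
          ((Real.sqrt ((k:ℝ) + 1) : ℂ) * ((Real.sqrt ((k:ℝ) + 2) : ℂ) * f (k + 2))))
        = ((Real.sqrt ((k:ℝ) + 2) : ℂ) * (Real.sqrt ((k:ℝ) + 2) : ℂ)) *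
          (((Real.sqrt ((k:ℝ) + 1) : ℂ) * (Real.sqrt ((k:ℝ) + 1) : ℂ)) * f (k + 2)) := by
          ring
      _ = (((k:ℝ) + 2 : ℝ) : ℂ) * ((((k:ℝ) + 1 : ℝ) : ℂ) * f (k + 2)) := by
          rw [sqsq _ (by positivity), sqsq _ (by positivity)]
      _ = ((k + 2 : ℕ) : ℂ) * (((k + 2 : ℕ) : ℂ) - 1) * f (k + 2) := by
          push_cast; ring

lemma ann2cre2 (f : ℕ → ℂ) (j : ℕ) :
    ann (ann (cre (cre f))) j = ((j : ℂ) + 1) * ((j : ℂ) + 2) * f j := by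
  simp only [ann, cre, if_neg (by omega : ¬ j + 1 + 1 = 0), if_neg (by omega : ¬ j + 1 + 1 - 1 = 0)]
  have e1 : j + 1 + 1 - 1 = j + 1 := by omega
  have e2 : j + 1 - 1 = j := by omega
  have e3 : ((j + 1 + 1 : ℕ) : ℝ) = (j : ℝ) + 2 := by push_cast; ring
  have e4 : ((j + 1 : ℕ) : ℝ) = (j : ℝ) + 1 := by push_cast; ring
  have e5 : ((j : ℕ) : ℝ) + 1 + 1 = (j : ℝ) + 2 := by push_cast; ring
  rw [e1, e2, e3, e4, e5]
  calc (Real.sqrt ((j:ℝ) + 1) : ℂ) * ((Real.sqrt ((j:ℝ) + 2) : ℂ) *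
        ((Real.sqrt ((j:ℝ) + 2) : ℂ) * ((Real.sqrt ((j:ℝ) + 1) : ℂ) * f j)))
      = ((Real.sqrt ((j:ℝ) + 1) : ℂ) * (Real.sqrt ((j:ℝ) + 1) : ℂ)) *
        (((Real.sqrt ((j:ℝ) + 2) : ℂ) * (Real.sqrt ((j:ℝ) + 2) : ℂ)) * f j) := by ring
    _ = (((j:ℝ) + 1 : ℝ) : ℂ) * ((((j:ℝ) + 2 : ℝ) : ℂ) * f j) := by
        rw [sqsq _ (by positivity), sqsq _ (by positivity)]
    _ = ((j : ℂ) + 1) * ((j : ℂ) + 2) * f j := by push_cast; ring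

/-- real diagonal damping coefficient -/
def dcoef (A1 A2 A3 A4 A5 A6 t : ℝ) : ℝ :=
  A1 * t + A2 * (t + 1) + A3 * t ^ 2 + A4 * t * (t - 1) + A5 * (t + 1) * (t + 2) + A6 * t ^ 4

def cc (q : ℕ) (k : ℕ) : ℝ := Real.sqrt ((k:ℝ) + 1) * (((k:ℝ) + 1) ^ q - (k:ℝ) ^ q)

def Ecoef (q : ℕ) (A1 A2 A3 A4 A5 A6 B : ℝ) (j : ℕ) : ℝ :=
  -((j:ℝ) ^ q * dcoef A1 A2 A3 A4 A5 A6 (j:ℝ))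
    + B * cc q j + (if j = 0 then 0 else B * cc q (j - 1))
    + (if 1 ≤ j then A1 * (((j-1 : ℕ):ℝ) ^ q * (((j-1 : ℕ):ℝ) + 1)) else 0)
    + A2 * (((j+1 : ℕ):ℝ) ^ q * ((j+1 : ℕ):ℝ))
    + A3 * ((j:ℝ) ^ q * (j:ℝ) ^ 2)
    + (if 2 ≤ j then A4 * (((j-2 : ℕ):ℝ) ^ q * ((((j-2:ℕ):ℝ) + 1) * (((j-2:ℕ):ℝ) + 2))) else 0)
    + A5 * (((j+2 : ℕ):ℝ) ^ q * (((j+2:ℕ):ℝ) * (((j+2:ℕ):ℝ) - 1)))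
    + A6 * ((j:ℝ) ^ q * (j:ℝ) ^ 4)

lemma Gop_apply (b1 b2 b3 : ℝ) (a1 a2 a3 a4 a5 a6 : ℂ) (x : ℕ → ℂ) (j : ℕ) :
    Gop b1 b2 b3 a1 a2 a3 a4 a5 a6 x j
      = (b1 : ℂ) * (cre x j - ann x j)
        + (-(Complex.I * ((b2 * j + b3 * j * (j - 1) : ℝ) : ℂ))
            + ((-(1/2) * dcoef (‖a1‖^2) (‖a2‖^2) (‖a3‖^2) (‖a4‖^2) (‖a5‖^2) (‖a6‖^2) j : ℝ) : ℂ))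
          * x j := by
  simp only [Gop, Ham, Pi.add_apply, Pi.sub_apply, Pi.smul_apply, smul_eq_mul,
    creAnn, annCre, cre2ann2, ann2cre2, num, dcoef]
  push_cast
  ring_nf
  simp [Complex.ext_iff]
  ring_nf
  constructor <;> trivial
-- HELPERS END

-- HELPERS2 START
lemma norm_numPow_sq (p j : ℕ) (y : ℂ) : ‖(j:ℂ) ^ p * y‖ ^ 2 = (j:ℝ) ^ (2*p) * ‖y‖ ^ 2 := by
  rw [norm_mul, mul_pow, norm_pow, Complex.norm_natCast, ← pow_mul]
  ring_nf

lemma norm_term_sq (c : ℂ) (s : ℝ) (hs : 0 ≤ s) (z : ℂ) :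
    ‖c * ((Real.sqrt s : ℂ) * z)‖ ^ 2 = ‖c‖ ^ 2 * (s * ‖z‖ ^ 2) := by
  rw [norm_mul, norm_mul, mul_pow, mul_pow, Complex.norm_real]
  rw [Real.norm_eq_abs, abs_of_nonneg (Real.sqrt_nonneg s), Real.sq_sqrt hs]

lemma norm_sqrt_mul_sq (s : ℝ) (hs : 0 ≤ s) (z : ℂ) :
    ‖(Real.sqrt s : ℂ) * z‖ ^ 2 = s * ‖z‖ ^ 2 := by
  rw [norm_mul, mul_pow, Complex.norm_real,
    Real.norm_eq_abs, abs_of_nonneg (Real.sqrt_nonneg s), Real.sq_sqrt hs]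

lemma re_real_mul_shift (s : ℝ) (u z : ℂ) :
    ((starRingEnd ℂ) u * ((s:ℂ) * z)).re = s * ((starRingEnd ℂ) u * z).re := by
  rw [show (starRingEnd ℂ) u * ((s:ℂ) * z) = (s:ℂ) * ((starRingEnd ℂ) u * z) by ring,
    Complex.re_ofReal_mul]

lemma re_conj_comm (u v : ℂ) :
    ((starRingEnd ℂ) u * v).re = ((starRingEnd ℂ) v * u).re := by
  have h : (starRingEnd ℂ) ((starRingEnd ℂ) u * v) = (starRingEnd ℂ) v * u := by
    rw [map_mul, Complex.conj_conj]; ring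
  rw [← Complex.conj_re ((starRingEnd ℂ) u * v), h]

lemma two_re_term (p : ℕ) (b1 b2 b3 : ℝ) (a1 a2 a3 a4 a5 a6 : ℂ) (x : ℕ → ℂ) (j : ℕ) :
    2 * ((starRingEnd ℂ) ((j:ℂ) ^ p * x j)
        * ((j:ℂ) ^ p * Gop b1 b2 b3 a1 a2 a3 a4 a5 a6 x j)).re
      = -((j:ℝ) ^ (2*p) * dcoef (‖a1‖^2) (‖a2‖^2) (‖a3‖^2) (‖a4‖^2) (‖a5‖^2) (‖a6‖^2) (j:ℝ))
          * ‖x j‖ ^ 2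
        + 2 * b1 * ((j:ℝ) ^ (2*p) * ((starRingEnd ℂ) (x j) * cre x j).re)
        - 2 * b1 * ((j:ℝ) ^ (2*p) * ((starRingEnd ℂ) (x j) * ann x j).re) := by
  rw [Gop_apply]
  have hnorm : ‖x j‖ ^ 2 = (x j).re ^ 2 + (x j).im ^ 2 := by
    rw [Complex.sq_norm, Complex.normSq_apply]; ring
  have hcast : ((j:ℂ)) ^ p = (((j:ℝ) ^ p : ℝ) : ℂ) := by push_cast; ring
  rw [hcast, hnorm]
  set D := dcoef (‖a1‖^2) (‖a2‖^2) (‖a3‖^2) (‖a4‖^2) (‖a5‖^2) (‖a6‖^2) (j:ℝ) with hD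
  simp only [map_mul, Complex.conj_ofReal, Complex.mul_re, Complex.mul_im,
    Complex.add_re, Complex.add_im, Complex.sub_re, Complex.sub_im, Complex.neg_re,
    Complex.neg_im, Complex.I_re, Complex.I_im, Complex.ofReal_re, Complex.ofReal_im,
    Complex.conj_re, Complex.conj_im]
  have e2p : (j:ℝ) ^ p * (j:ℝ) ^ p = (j:ℝ) ^ (2*p) := by rw [← pow_add]; congr 1; omega
  rw [← e2p]
  ring
-- HELPERS2 END

lemma Ecoef_eventually (q : ℕ) (hq : 8 ≤ q) (A1 A2 A3 A4 A5 A6 B al : ℝ)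
    (h1 : 0 ≤ A1) (h2 : 0 ≤ A2) (h5 : 0 ≤ A5) (hB : 0 ≤ B) (hal : 0 < al) (hd : A5 < A4) :
    ∃ J : ℕ, ∀ j : ℕ, J ≤ j → Ecoef q A1 A2 A3 A4 A5 A6 B j + al * (j:ℝ) ^ q ≤ 0 := by
  have h4 : 0 ≤ A4 := le_of_lt (lt_of_le_of_lt h5 hd)
  have hqR : (8:ℝ) ≤ (q:ℝ) := by exact_mod_cast hq
  set δ : ℝ := A4 - A5 with hδdef
  have hδpos : 0 < δ := by simp only [hδdef]; linarith
  set C : ℝ := 8 * (q:ℝ) * ((q:ℝ)+1) * A5 + (q:ℝ) * A2 + 2 * (q:ℝ) * B + al with hCdef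
  have hC0 : 0 < C := by
    have : 0 ≤ 8 * (q:ℝ) * ((q:ℝ)+1) * A5 := by positivity
    have : 0 ≤ (q:ℝ) * A2 := by positivity
    have : 0 ≤ 2 * (q:ℝ) * B := by positivity
    simp only [hCdef]; positivity
  obtain ⟨M, hM⟩ := exists_nat_ge (C * 2 ^ q / (2 * (q:ℝ) * δ))
  refine ⟨M + 8, fun j hj => ?_⟩
  have hj8 : 8 ≤ j := by omega
  have hjM : M ≤ j := by omega
  set t : ℝ := (j:ℝ) with htdef
  have ht8 : (8:ℝ) ≤ t := by simp only [htdef]; exact_mod_cast hj8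
  have htM : (M:ℝ) + 8 ≤ t := by
    have : ((M + 8 : ℕ):ℝ) ≤ t := by simp only [htdef]; exact_mod_cast hj
    push_cast at this; linarith
  have ht0 : (0:ℝ) ≤ t := by linarith
  have ht1 : (0:ℝ) ≤ t - 1 := by linarith
  have ht2 : (0:ℝ) ≤ t - 2 := by linarith
  -- resolve casts and ifs in Ecoef
  have e1 : ((j - 1 : ℕ):ℝ) = t - 1 := by
    rw [Nat.cast_sub (by omega)]; simp [htdef]
  have e2 : ((j - 2 : ℕ):ℝ) = t - 2 := by
    rw [Nat.cast_sub (by omega)]; simp [htdef]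
  have e3 : ((j + 1 : ℕ):ℝ) = t + 1 := by push_cast [htdef]; ring
  have e4 : ((j + 2 : ℕ):ℝ) = t + 2 := by push_cast [htdef]; ring
  have hccj : cc q j = Real.sqrt (t + 1) * ((t + 1) ^ q - t ^ q) := by
    simp [cc, htdef]
  have hccj1 : cc q (j - 1) = Real.sqrt t * (t ^ q - (t - 1) ^ q) := by
    simp only [cc, e1]
    have : t - 1 + 1 = t := by ring
    rw [this]
  rw [Ecoef, hccj, hccj1, if_neg (by omega : ¬ j = 0), if_pos (by omega : 1 ≤ j),
    if_pos (by omega : 2 ≤ j), e1, e2, e3, e4, dcoef]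
  rw [← htdef]
  -- grouping identity
  have key : -(t ^ q * (A1 * t + A2 * (t + 1) + A3 * t ^ 2 + A4 * t * (t - 1)
        + A5 * (t + 1) * (t + 2) + A6 * t ^ 4))
      + B * (Real.sqrt (t + 1) * ((t + 1) ^ q - t ^ q))
      + B * (Real.sqrt t * (t ^ q - (t - 1) ^ q))
      + A1 * ((t - 1) ^ q * (t - 1 + 1))
      + A2 * ((t + 1) ^ q * (t + 1))
      + A3 * (t ^ q * t ^ 2)
      + A4 * ((t - 2) ^ q * ((t - 2 + 1) * (t - 2 + 2)))
      + A5 * ((t + 2) ^ q * ((t + 2) * (t + 2 - 1)))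
      + A6 * (t ^ q * t ^ 4)
      + al * t ^ q
      = A1 * t * ((t - 1) ^ q - t ^ q)
        + A2 * (t + 1) * ((t + 1) ^ q - t ^ q)
        + A4 * (t * (t - 1)) * ((t - 2) ^ q - t ^ q)
        + A5 * ((t + 1) * (t + 2)) * ((t + 2) ^ q - t ^ q)
        + B * (Real.sqrt (t + 1) * ((t + 1) ^ q - t ^ q))
        + B * (Real.sqrt t * (t ^ q - (t - 1) ^ q))
        + al * t ^ q := by ring
  rw [key]
  -- individual bounds
  have hq1 : q - 1 + 1 = q := by omega
  have epow1 : (t + 1) ^ (q - 1) * (t + 1) = (t + 1) ^ q := by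
    rw [← pow_succ, hq1]
  have epow2 : t ^ (q - 1) * t = t ^ q := by rw [← pow_succ, hq1]
  have epow3 : (t - 2) ^ 2 * (t - 2) ^ (q - 1) = (t - 2) ^ (q + 1) := by
    rw [← pow_add]; congr 1; omega
  have epow4 : (t + 2) ^ 2 * (t + 2) ^ (q - 1) = (t + 2) ^ (q + 1) := by
    rw [← pow_add]; congr 1; omega
  have hd1 : (t + 1) ^ q - t ^ q ≤ (q:ℝ) * (t + 1) ^ (q - 1) := by
    have h := pow_sub_pow_le' ht0 (by linarith only : t ≤ t + 1) q
    have e : t + 1 - t = 1 := by ring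
    rw [e, mul_one] at h; exact h
  have hd1' : 0 ≤ (t + 1) ^ q - t ^ q :=
    sub_nonneg.mpr (pow_le_pow_left₀ ht0 (by linarith only) q)
  have hd2 : t ^ q - (t - 1) ^ q ≤ (q:ℝ) * t ^ (q - 1) := by
    have h := pow_sub_pow_le' ht1 (by linarith only : t - 1 ≤ t) q
    have e : t - (t - 1) = 1 := by ring
    rw [e, mul_one] at h; exact h
  have hd2' : 0 ≤ t ^ q - (t - 1) ^ q :=
    sub_nonneg.mpr (pow_le_pow_left₀ ht1 (by linarith only) q)
  -- g1 ≤ 0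
  have b1 : A1 * t * ((t - 1) ^ q - t ^ q) ≤ 0 := by
    have : (t - 1) ^ q - t ^ q ≤ 0 :=
      sub_nonpos.mpr (pow_le_pow_left₀ ht1 (by linarith only) q)
    exact mul_nonpos_of_nonneg_of_nonpos (by positivity) this
  -- g2
  have b2 : A2 * (t + 1) * ((t + 1) ^ q - t ^ q) ≤ (q:ℝ) * A2 * (t + 2) ^ q := by
    calc A2 * (t + 1) * ((t + 1) ^ q - t ^ q)
        ≤ A2 * (t + 1) * ((q:ℝ) * (t + 1) ^ (q - 1)) :=
          mul_le_mul_of_nonneg_left hd1 (by positivity)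
      _ = (q:ℝ) * A2 * (t + 1) ^ q := by rw [← epow1]; ring
      _ ≤ (q:ℝ) * A2 * (t + 2) ^ q := by
          have := pow_le_pow_left₀ (by linarith only [ht0] : (0:ℝ) ≤ t + 1) (by linarith only : t + 1 ≤ t + 2) q
          exact mul_le_mul_of_nonneg_left this (by positivity)
  -- cross terms
  have bs1 : B * (Real.sqrt (t + 1) * ((t + 1) ^ q - t ^ q)) ≤ (q:ℝ) * B * (t + 2) ^ q := by
    have hs : Real.sqrt (t + 1) ≤ t + 1 := sqrt_le_self' (by linarith only [ht0])
    calc B * (Real.sqrt (t + 1) * ((t + 1) ^ q - t ^ q))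
        ≤ B * ((t + 1) * ((q:ℝ) * (t + 1) ^ (q - 1))) := by
          refine mul_le_mul_of_nonneg_left ?_ hB
          exact mul_le_mul hs hd1 hd1' (by linarith only [ht0])
      _ = (q:ℝ) * B * (t + 1) ^ q := by rw [← epow1]; ring
      _ ≤ (q:ℝ) * B * (t + 2) ^ q := by
          have := pow_le_pow_left₀ (by linarith only [ht0] : (0:ℝ) ≤ t + 1) (by linarith only : t + 1 ≤ t + 2) q
          exact mul_le_mul_of_nonneg_left this (by positivity)
  have bs2 : B * (Real.sqrt t * (t ^ q - (t - 1) ^ q)) ≤ (q:ℝ) * B * (t + 2) ^ q := by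
    have hs : Real.sqrt t ≤ t := sqrt_le_self' (by linarith only [ht8])
    calc B * (Real.sqrt t * (t ^ q - (t - 1) ^ q))
        ≤ B * (t * ((q:ℝ) * t ^ (q - 1))) := by
          refine mul_le_mul_of_nonneg_left ?_ hB
          exact mul_le_mul hs hd2 hd2' ht0
      _ = (q:ℝ) * B * t ^ q := by rw [← epow2]; ring
      _ ≤ (q:ℝ) * B * (t + 2) ^ q := by
          have := pow_le_pow_left₀ ht0 (by linarith only : t ≤ t + 2) q
          exact mul_le_mul_of_nonneg_left this (by positivity)
  -- g4
  have b4 : A4 * (t * (t - 1)) * ((t - 2) ^ q - t ^ q) ≤ -(2 * (q:ℝ) * A4 * (t - 2) ^ (q + 1)) := by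
    have hlow := le_pow_sub_pow ht2 (by linarith only : t - 2 ≤ t) q
    have e : t - (t - 2) = 2 := by ring
    rw [e] at hlow
    -- hlow : q * (t-2)^(q-1) * 2 ≤ t^q - (t-2)^q
    have hstep : (t - 2) ^ q - t ^ q ≤ -(2 * (q:ℝ) * (t - 2) ^ (q - 1)) := by linarith only [hlow]
    have hneg : -(2 * (q:ℝ) * (t - 2) ^ (q - 1)) ≤ 0 := by
      have : 0 ≤ 2 * (q:ℝ) * (t - 2) ^ (q - 1) := by positivity
      linarith only [this]
    have hsq : (t - 2) ^ 2 ≤ t * (t - 1) := by nlinarith only [ht8]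
    calc A4 * (t * (t - 1)) * ((t - 2) ^ q - t ^ q)
        ≤ A4 * (t * (t - 1)) * (-(2 * (q:ℝ) * (t - 2) ^ (q - 1))) :=
          mul_le_mul_of_nonneg_left hstep (mul_nonneg h4 (mul_nonneg ht0 ht1))
      _ ≤ A4 * ((t - 2) ^ 2) * (-(2 * (q:ℝ) * (t - 2) ^ (q - 1))) := by
          refine mul_le_mul_of_nonpos_right ?_ hneg
          exact mul_le_mul_of_nonneg_left hsq h4
      _ = -(2 * (q:ℝ) * A4 * (t - 2) ^ (q + 1)) := by rw [← epow3]; ring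
  -- g5
  have b5 : A5 * ((t + 1) * (t + 2)) * ((t + 2) ^ q - t ^ q)
      ≤ 2 * (q:ℝ) * A5 * (t - 2) ^ (q + 1) + 8 * (q:ℝ) * ((q:ℝ) + 1) * A5 * (t + 2) ^ q := by
    have hup := pow_sub_pow_le' ht0 (by linarith only : t ≤ t + 2) q
    have e : t + 2 - t = 2 := by ring
    rw [e] at hup
    have hd5' : 0 ≤ (t + 2) ^ q - t ^ q :=
      sub_nonneg.mpr (pow_le_pow_left₀ ht0 (by linarith only) q)
    have step1 : A5 * ((t + 1) * (t + 2)) * ((t + 2) ^ q - t ^ q)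
        ≤ A5 * ((t + 2) ^ 2) * ((q:ℝ) * (t + 2) ^ (q - 1) * 2) := by
      refine mul_le_mul ?_ hup hd5' (by positivity)
      refine mul_le_mul_of_nonneg_left ?_ h5
      calc (t + 1) * (t + 2) ≤ (t + 2) * (t + 2) :=
            mul_le_mul_of_nonneg_right (by linarith only) (by linarith only [ht0])
        _ = (t + 2) ^ 2 := by ring
    have step2 : A5 * ((t + 2) ^ 2) * ((q:ℝ) * (t + 2) ^ (q - 1) * 2)
        = 2 * (q:ℝ) * A5 * (t + 2) ^ (q + 1) := by rw [← epow4]; ring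
    have hsplit := pow_sub_pow_le' ht2 (by linarith only : t - 2 ≤ t + 2) (q + 1)
    have e2' : t + 2 - (t - 2) = 4 := by ring
    have e3' : q + 1 - 1 = q := by omega
    rw [e2', e3'] at hsplit
    push_cast at hsplit
    -- hsplit : (t+2)^(q+1) - (t-2)^(q+1) ≤ (q+1) * (t+2)^q * 4
    have : 2 * (q:ℝ) * A5 * (t + 2) ^ (q + 1)
        ≤ 2 * (q:ℝ) * A5 * (t - 2) ^ (q + 1) + 8 * (q:ℝ) * ((q:ℝ) + 1) * A5 * (t + 2) ^ q := by
      have h2q : (0:ℝ) ≤ 2 * (q:ℝ) * A5 := by positivity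
      have emul : 2 * (q:ℝ) * A5 * ((t + 2) ^ (q + 1) - (t - 2) ^ (q + 1))
          = 2 * (q:ℝ) * A5 * (t + 2) ^ (q + 1) - 2 * (q:ℝ) * A5 * (t - 2) ^ (q + 1) := by ring
      have emul2 : 2 * (q:ℝ) * A5 * (((q:ℝ) + 1) * (t + 2) ^ q * 4)
          = 8 * (q:ℝ) * ((q:ℝ) + 1) * A5 * (t + 2) ^ q := by ring
      have h3 := mul_le_mul_of_nonneg_left hsplit h2q
      rw [emul, emul2] at h3
      linarith only [h3]
    linarith only [step1, step2.le, step2.ge, this]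
  have bal : al * t ^ q ≤ al * (t + 2) ^ q := by
    have := pow_le_pow_left₀ ht0 (by linarith only : t ≤ t + 2) q
    exact mul_le_mul_of_nonneg_left this hal.le
  -- final negativity
  have hfinal : -(2 * (q:ℝ) * A4 * (t - 2) ^ (q + 1)) + 2 * (q:ℝ) * A5 * (t - 2) ^ (q + 1)
      + 8 * (q:ℝ) * ((q:ℝ) + 1) * A5 * (t + 2) ^ q + (q:ℝ) * A2 * (t + 2) ^ q
      + 2 * ((q:ℝ) * B * (t + 2) ^ q) + al * (t + 2) ^ q ≤ 0 := by
    have hqd : (0:ℝ) < 2 * (q:ℝ) * δ := by positivity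
    have hMC : C * 2 ^ q ≤ 2 * (q:ℝ) * δ * (t - 2) := by
      have h' : C * 2 ^ q / (2 * (q:ℝ) * δ) ≤ t - 2 := by
        calc C * 2 ^ q / (2 * (q:ℝ) * δ) ≤ (M:ℝ) := hM
          _ ≤ t - 2 := by linarith only [htM]
      calc C * 2 ^ q = C * 2 ^ q / (2 * (q:ℝ) * δ) * (2 * (q:ℝ) * δ) := by
            field_simp
        _ ≤ (t - 2) * (2 * (q:ℝ) * δ) := mul_le_mul_of_nonneg_right h' hqd.le
        _ = 2 * (q:ℝ) * δ * (t - 2) := by ring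
    have hpw : (t + 2) ^ q ≤ 2 ^ q * (t - 2) ^ q := by
      have h1' : t + 2 ≤ 2 * (t - 2) := by linarith only [ht8]
      have := pow_le_pow_left₀ (by linarith : (0:ℝ) ≤ t + 2) h1' q
      rw [mul_pow] at this
      exact this
    have hC2 : C * (t + 2) ^ q ≤ 2 * (q:ℝ) * δ * (t - 2) ^ (q + 1) := by
      calc C * (t + 2) ^ q ≤ C * (2 ^ q * (t - 2) ^ q) :=
            mul_le_mul_of_nonneg_left hpw hC0.le
        _ = C * 2 ^ q * (t - 2) ^ q := by ring
        _ ≤ 2 * (q:ℝ) * δ * (t - 2) * (t - 2) ^ q :=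
            mul_le_mul_of_nonneg_right hMC (by positivity)
        _ = 2 * (q:ℝ) * δ * (t - 2) ^ (q + 1) := by rw [pow_succ]; ring
    have expand : -(2 * (q:ℝ) * A4 * (t - 2) ^ (q + 1)) + 2 * (q:ℝ) * A5 * (t - 2) ^ (q + 1)
        = -(2 * (q:ℝ) * δ * (t - 2) ^ (q + 1)) := by simp only [hδdef]; ring
    have expandC : 8 * (q:ℝ) * ((q:ℝ)+1) * A5 * (t + 2) ^ q + (q:ℝ) * A2 * (t + 2) ^ q
        + 2 * ((q:ℝ) * B * (t + 2) ^ q) + al * (t + 2) ^ q = C * (t + 2) ^ q := by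
      simp only [hCdef]; ring
    linarith only [hC2, expand.le, expand.ge, expandC.le, expandC.ge]
  linarith only [b1, b2, bs1, bs2, b4, b5, bal, hfinal]


open Finset in
/-- the Lyapunov condition (H3.3) for `(N^p, √α N^p)` in the proof of
Theorem 8, case `|α₄| > |α₅|`. For `p ≥ 4` and every
`α ∈ (0, 4p(|α₄|² − |α₅|²))` there are `β ≥ 0` and `N₀` with
`2 Re⟨N^p x, N^p Pₙ G x⟩ + Σ_{k=1}^{6} ‖N^p Pₙ L_k x‖² ≤ −α ‖N^p x‖² + β(1 + ‖x‖²)`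
for all `n ≥ N₀` and all `x ∈ h_n`. -/
theorem stmt11 (p : ℕ) (hp : 4 ≤ p) (b1 b2 b3 : ℝ) (a1 a2 a3 a4 a5 a6 : ℂ)
    (ha : ‖a5‖ < ‖a4‖) :
    ∀ al : ℝ, 0 < al → al < 4 * p * (‖a4‖ ^ 2 - ‖a5‖ ^ 2) →
      ∃ be : ℝ, 0 ≤ be ∧ ∃ N₀ : ℕ,
        ∀ n : ℕ, N₀ ≤ n → ∀ x : ℕ → ℂ, (∀ j, n < j → x j = 0) →
          2 * (innerSeq (numPow p x)
                (numPow p (proj n (Gop b1 b2 b3 a1 a2 a3 a4 a5 a6 x)))).re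
            + (normSq (numPow p (proj n (a1 • ann x)))
              + normSq (numPow p (proj n (a2 • cre x)))
              + normSq (numPow p (proj n (a3 • num x)))
              + normSq (numPow p (proj n (a4 • ann (ann x))))
              + normSq (numPow p (proj n (a5 • cre (cre x))))
              + normSq (numPow p (proj n (a6 • num (num x)))))
            ≤ -al * normSq (numPow p x) + be * (1 + normSq x) := by
  intro al hal _halub
  have hA1 : (0:ℝ) ≤ ‖a1‖^2 := by positivity
  have hA2 : (0:ℝ) ≤ ‖a2‖^2 := by positivity
  have hA5 : (0:ℝ) ≤ ‖a5‖^2 := by positivity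
  have hB : (0:ℝ) ≤ |b1| := abs_nonneg b1
  have hd : ‖a5‖^2 < ‖a4‖^2 := by
    have h0 : (0:ℝ) ≤ ‖a5‖ := norm_nonneg a5
    nlinarith
  have hq : 8 ≤ 2*p := by omega
  obtain ⟨J, hJ⟩ := Ecoef_eventually (2*p) hq (‖a1‖^2) (‖a2‖^2) (‖a3‖^2) (‖a4‖^2)
    (‖a5‖^2) (‖a6‖^2) (|b1|) al hA1 hA2 hA5 hB hal hd
  set E : ℕ → ℝ := Ecoef (2*p) (‖a1‖^2) (‖a2‖^2) (‖a3‖^2) (‖a4‖^2) (‖a5‖^2) (‖a6‖^2) (|b1|)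
    with hEdef
  set be : ℝ := ∑ i ∈ range J, |E i + al * (i:ℝ)^(2*p)| with hbedef
  have hbe0 : 0 ≤ be := Finset.sum_nonneg fun i _ => abs_nonneg _
  refine ⟨be, hbe0, J + 8, ?_⟩
  intro n hn x hx
  have hn8 : 8 ≤ n := by omega
  have hw0 : ∀ j : ℕ, 0 ≤ ‖x j‖^2 := fun j => by positivity
  have hwvan : ∀ j, n < j → ‖x j‖^2 = 0 := fun j hj => by rw [hx j hj]; simp
  -- pointwise coefficient bound
  have hE : ∀ j : ℕ, E j ≤ -al * (j:ℝ)^(2*p) + be := by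
    intro j
    rcases Nat.lt_or_ge j J with h | h
    · have h1 : E j + al * (j:ℝ)^(2*p) ≤ |E j + al * (j:ℝ)^(2*p)| := le_abs_self _
      have h2 : |E j + al * (j:ℝ)^(2*p)| ≤ be := by
        rw [hbedef]
        exact Finset.single_le_sum (f := fun i => |E i + al*(i:ℝ)^(2*p)|)
          (fun i _ => abs_nonneg _) (Finset.mem_range.mpr h)
      linarith only [h1, h2]
    · have h1 := hJ j h
      linarith only [h1, hbe0]
  -- inner product reduction
  have hIsum : innerSeq (numPow p x) (numPow p (proj n (Gop b1 b2 b3 a1 a2 a3 a4 a5 a6 x)))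
      = ∑ j ∈ range (n+1),
          (starRingEnd ℂ) ((j:ℂ)^p * x j) * ((j:ℂ)^p * Gop b1 b2 b3 a1 a2 a3 a4 a5 a6 x j) := by
    rw [innerSeq]
    rw [tsum_eq_sum (s := range (n+1))
      (f := fun j => (starRingEnd ℂ) (numPow p x j)
        * numPow p (proj n (Gop b1 b2 b3 a1 a2 a3 a4 a5 a6 x)) j)]
    · refine Finset.sum_congr rfl fun j hj => ?_
      have hjn : j ≤ n := by have := Finset.mem_range.mp hj; omega
      simp only [numPow, proj, if_pos hjn]
    · intro j hj
      have hjn : ¬ j ≤ n := by simp only [Finset.mem_range] at hj; omega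
      simp [numPow, proj, hjn]
  have hRe : 2 * (innerSeq (numPow p x)
        (numPow p (proj n (Gop b1 b2 b3 a1 a2 a3 a4 a5 a6 x)))).re
      = ∑ j ∈ range (n+1),
          (-((j:ℝ)^(2*p) * dcoef (‖a1‖^2) (‖a2‖^2) (‖a3‖^2) (‖a4‖^2) (‖a5‖^2) (‖a6‖^2) (j:ℝ))
            * ‖x j‖^2)
        + (∑ j ∈ range (n+1), 2*b1*((j:ℝ)^(2*p) * ((starRingEnd ℂ) (x j) * cre x j).re)
           - ∑ j ∈ range (n+1), 2*b1*((j:ℝ)^(2*p) * ((starRingEnd ℂ) (x j) * ann x j).re)) := by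
    rw [hIsum, Complex.re_sum, Finset.mul_sum]
    rw [← Finset.sum_sub_distrib, ← Finset.sum_add_distrib]
    refine Finset.sum_congr rfl fun j _ => ?_
    rw [two_re_term p b1 b2 b3 a1 a2 a3 a4 a5 a6 x j]
    ring
  -- cross terms
  have hC1 : ∑ j ∈ range (n+1), 2*b1*((j:ℝ)^(2*p) * ((starRingEnd ℂ) (x j) * cre x j).re)
      = ∑ k ∈ range n,
          2*b1*(((k+1:ℕ):ℝ)^(2*p) * (Real.sqrt ((k+1:ℕ):ℝ)
            * ((starRingEnd ℂ) (x (k+1)) * x k).re)) := by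
    rw [sum_shift_one n _ (by simp [cre])]
    refine Finset.sum_congr rfl fun k _ => ?_
    simp only [cre, if_neg (Nat.succ_ne_zero k), Nat.add_sub_cancel]
    rw [re_real_mul_shift]
  have hC2 : ∑ j ∈ range (n+1), 2*b1*((j:ℝ)^(2*p) * ((starRingEnd ℂ) (x j) * ann x j).re)
      = ∑ k ∈ range n,
          2*b1*((k:ℝ)^(2*p) * (Real.sqrt ((k:ℝ)+1)
            * ((starRingEnd ℂ) (x k) * x (k+1)).re)) := by
    rw [Finset.sum_range_succ]
    have hlast2 : ann x n = (0:ℂ) := by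
      simp [ann, hx (n+1) (by omega)]
    rw [hlast2]
    simp only [mul_zero, Complex.zero_re, mul_zero, add_zero]
    refine Finset.sum_congr rfl fun k _ => ?_
    simp only [ann]
    rw [re_real_mul_shift]
  have hCross : ∑ j ∈ range (n+1), 2*b1*((j:ℝ)^(2*p) * ((starRingEnd ℂ) (x j) * cre x j).re)
        - ∑ j ∈ range (n+1), 2*b1*((j:ℝ)^(2*p) * ((starRingEnd ℂ) (x j) * ann x j).re)
      = ∑ k ∈ range n, 2*b1*cc (2*p) k * ((starRingEnd ℂ) (x (k+1)) * x k).re := by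
    rw [hC1, hC2, ← Finset.sum_sub_distrib]
    refine Finset.sum_congr rfl fun k _ => ?_
    rw [cc, re_conj_comm (x k) (x (k+1))]
    push_cast
    ring
  have hCrossBound : ∑ k ∈ range n, 2*b1*cc (2*p) k * ((starRingEnd ℂ) (x (k+1)) * x k).re
      ≤ ∑ k ∈ range n, |b1| * cc (2*p) k * (‖x k‖^2 + ‖x (k+1)‖^2) := by
    refine Finset.sum_le_sum fun k _ => ?_
    have hcc : 0 ≤ cc (2*p) k := by
      refine mul_nonneg (Real.sqrt_nonneg _) (sub_nonneg.mpr ?_)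
      exact pow_le_pow_left₀ (by positivity) (by linarith [Nat.cast_nonneg (α := ℝ) k]) _
    have hR : |((starRingEnd ℂ) (x (k+1)) * x k).re| ≤ (‖x k‖^2 + ‖x (k+1)‖^2)/2 := by
      have h1 : |((starRingEnd ℂ) (x (k+1)) * x k).re| ≤ ‖(starRingEnd ℂ) (x (k+1)) * x k‖ := by
        exact Complex.abs_re_le_norm _
      rw [norm_mul, RCLike.norm_conj] at h1
      nlinarith [sq_nonneg (‖x (k+1)‖ - ‖x k‖), norm_nonneg (x k), norm_nonneg (x (k+1))]
    calc 2*b1*cc (2*p) k * ((starRingEnd ℂ) (x (k+1)) * x k).re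
        ≤ |2*b1*cc (2*p) k * ((starRingEnd ℂ) (x (k+1)) * x k).re| := le_abs_self _
      _ = 2 * |b1| * cc (2*p) k * |((starRingEnd ℂ) (x (k+1)) * x k).re| := by
          rw [abs_mul, abs_mul, abs_mul, abs_two, abs_of_nonneg hcc]
      _ ≤ 2 * |b1| * cc (2*p) k * ((‖x k‖^2 + ‖x (k+1)‖^2)/2) :=
          mul_le_mul_of_nonneg_left hR (by positivity)
      _ = |b1| * cc (2*p) k * (‖x k‖^2 + ‖x (k+1)‖^2) := by ring
  have hCrossSplit : ∑ k ∈ range n, |b1| * cc (2*p) k * (‖x k‖^2 + ‖x (k+1)‖^2)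
      ≤ ∑ j ∈ range (n+1), (|b1| * cc (2*p) j) * ‖x j‖^2
        + ∑ j ∈ range (n+1), (if j = 0 then 0 else |b1| * cc (2*p) (j-1)) * ‖x j‖^2 := by
    have hsplit : ∑ k ∈ range n, |b1| * cc (2*p) k * (‖x k‖^2 + ‖x (k+1)‖^2)
        = ∑ k ∈ range n, (|b1| * cc (2*p) k) * ‖x k‖^2
          + ∑ k ∈ range n, (|b1| * cc (2*p) k) * ‖x (k+1)‖^2 := by
      rw [← Finset.sum_add_distrib]
      exact Finset.sum_congr rfl fun k _ => by ring
    have hccnn : ∀ k : ℕ, 0 ≤ cc (2*p) k := by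
      intro k
      refine mul_nonneg (Real.sqrt_nonneg _) (sub_nonneg.mpr ?_)
      exact pow_le_pow_left₀ (by positivity) (by linarith [Nat.cast_nonneg (α := ℝ) k]) _
    have h1 : ∑ k ∈ range n, (|b1| * cc (2*p) k) * ‖x k‖^2
        ≤ ∑ j ∈ range (n+1), (|b1| * cc (2*p) j) * ‖x j‖^2 := by
      refine Finset.sum_le_sum_of_subset_of_nonneg (Finset.range_subset_range.mpr (by omega)) ?_
      intro j _ _
      exact mul_nonneg (mul_nonneg hB (hccnn j)) (hw0 j)
    have h2 : ∑ k ∈ range n, (|b1| * cc (2*p) k) * ‖x (k+1)‖^2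
        = ∑ j ∈ range (n+1), (if j = 0 then 0 else |b1| * cc (2*p) (j-1)) * ‖x j‖^2 := by
      rw [sum_shift_one n (fun j => (if j = 0 then 0 else |b1| * cc (2*p) (j-1)) * ‖x j‖^2)
        (by simp)]
      refine (Finset.sum_congr rfl fun k _ => ?_).symm
      simp only [if_neg (Nat.succ_ne_zero k), Nat.add_sub_cancel]
    linarith only [hsplit.le, hsplit.ge, h1, h2.le, h2.ge]
  -- normSq reductions
  have hredL : ∀ y : ℕ → ℂ, normSq (numPow p (proj n y))
      = ∑ j ∈ range (n+1), ‖(j:ℂ)^p * y j‖^2 := by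
    intro y
    rw [normSq]
    rw [tsum_eq_sum (s := range (n+1)) (f := fun j => ‖numPow p (proj n y) j‖^2)]
    · refine Finset.sum_congr rfl fun j hj => ?_
      have hjn : j ≤ n := by have := Finset.mem_range.mp hj; omega
      simp only [numPow, proj, if_pos hjn]
    · intro j hj
      have hjn : ¬ j ≤ n := by simp only [Finset.mem_range] at hj; omega
      simp [numPow, proj, hjn]
  have hL1 : normSq (numPow p (proj n (a1 • ann x)))
      = ∑ j ∈ range (n+1), (‖a1‖^2 * ((j:ℝ)^(2*p) * ((j:ℝ)+1))) * ‖x (j+1)‖^2 := by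
    rw [hredL]
    refine Finset.sum_congr rfl fun j _ => ?_
    simp only [Pi.smul_apply, smul_eq_mul, ann]
    rw [norm_numPow_sq, norm_term_sq a1 _ (by positivity)]
    ring
  have hL1' : ∑ j ∈ range (n+1), (‖a1‖^2 * ((j:ℝ)^(2*p) * ((j:ℝ)+1))) * ‖x (j+1)‖^2
      = ∑ j ∈ range (n+1),
          (if 1 ≤ j then ‖a1‖^2 * (((j-1:ℕ):ℝ)^(2*p) * (((j-1:ℕ):ℝ)+1)) else 0) * ‖x j‖^2 :=
    sum_shift_up n 1 (fun k => ‖a1‖^2 * ((k:ℝ)^(2*p) * ((k:ℝ)+1))) (fun k => ‖x k‖^2) hwvan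
  have hL1'' : ∑ j ∈ range (n+1),
          (if 1 ≤ j then ‖a1‖^2 * (((j-1:ℕ):ℝ)^(2*p) * (((j-1:ℕ):ℝ)+1)) else 0) * ‖x j‖^2
      ≤ ∑ j ∈ range (n+1),
          (if 1 ≤ j then ‖a1‖^2 * (((j-1:ℕ):ℝ)^(2*p) * (((j-1:ℕ):ℝ)+1)) else 0) * ‖x j‖^2 :=
    le_refl _
  have hL2 : normSq (numPow p (proj n (a2 • cre x)))
      = ∑ j ∈ range (n+1), (‖a2‖^2 * ((j:ℝ)^(2*p) * (j:ℝ))) * ‖x (j-1)‖^2 := by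
    rw [hredL]
    refine Finset.sum_congr rfl fun j _ => ?_
    rcases Nat.eq_zero_or_pos j with h | h
    · subst h; simp [cre]
    · simp only [Pi.smul_apply, smul_eq_mul, cre, if_neg (by omega : ¬ j = 0)]
      rw [norm_numPow_sq, norm_term_sq a2 _ (by positivity)]
      ring
  have hL2' : ∑ j ∈ range (n+1), (‖a2‖^2 * ((j:ℝ)^(2*p) * (j:ℝ))) * ‖x (j-1)‖^2
      ≤ ∑ j ∈ range (n+1), (‖a2‖^2 * (((j+1:ℕ):ℝ)^(2*p) * ((j+1:ℕ):ℝ))) * ‖x j‖^2 := by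
    refine sum_shift_down (n+1) 1 (fun k => ‖a2‖^2 * ((k:ℝ)^(2*p) * (k:ℝ)))
      (fun k => ‖x k‖^2) (by omega) ?_ ?_ hw0
    · intro j hj
      have : j = 0 := by omega
      subst this; simp
    · intro j
      positivity
  have hL3 : normSq (numPow p (proj n (a3 • num x)))
      = ∑ j ∈ range (n+1), (‖a3‖^2 * ((j:ℝ)^(2*p) * (j:ℝ)^2)) * ‖x j‖^2 := by
    rw [hredL]
    refine Finset.sum_congr rfl fun j _ => ?_
    simp only [Pi.smul_apply, smul_eq_mul, num]
    rw [norm_numPow_sq]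
    rw [norm_mul, norm_mul, Complex.norm_natCast]
    ring
  have hL4 : normSq (numPow p (proj n (a4 • ann (ann x))))
      = ∑ j ∈ range (n+1),
          (‖a4‖^2 * ((j:ℝ)^(2*p) * (((j:ℝ)+1)*((j:ℝ)+2)))) * ‖x (j+2)‖^2 := by
    rw [hredL]
    refine Finset.sum_congr rfl fun j _ => ?_
    simp only [Pi.smul_apply, smul_eq_mul, ann]
    rw [norm_numPow_sq, norm_term_sq a4 _ (by positivity),
      norm_sqrt_mul_sq _ (by positivity)]
    have e : ((j+1:ℕ):ℝ) + 1 = (j:ℝ) + 2 := by push_cast; ring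
    rw [e]
    have e2 : j + 1 + 1 = j + 2 := by omega
    rw [e2]
    ring
  have hL4' : ∑ j ∈ range (n+1),
          (‖a4‖^2 * ((j:ℝ)^(2*p) * (((j:ℝ)+1)*((j:ℝ)+2)))) * ‖x (j+2)‖^2
      = ∑ j ∈ range (n+1),
          (if 2 ≤ j then ‖a4‖^2 * (((j-2:ℕ):ℝ)^(2*p)
            * ((((j-2:ℕ):ℝ)+1)*(((j-2:ℕ):ℝ)+2))) else 0) * ‖x j‖^2 :=
    sum_shift_up n 2 (fun k => ‖a4‖^2 * ((k:ℝ)^(2*p) * (((k:ℝ)+1)*((k:ℝ)+2))))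
      (fun k => ‖x k‖^2) hwvan
  have hL5 : normSq (numPow p (proj n (a5 • cre (cre x))))
      = ∑ j ∈ range (n+1), (‖a5‖^2 * ((j:ℝ)^(2*p) * ((j:ℝ)*((j:ℝ)-1)))) * ‖x (j-2)‖^2 := by
    rw [hredL]
    refine Finset.sum_congr rfl fun j _ => ?_
    rcases Nat.lt_or_ge j 2 with h | h
    · interval_cases j <;> simp [cre, norm_numPow_sq] <;> ring
    · obtain ⟨k, rfl⟩ : ∃ k, j = k + 2 := ⟨j - 2, by omega⟩
      simp only [Pi.smul_apply, smul_eq_mul, cre,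
        if_neg (by omega : ¬ k + 2 = 0), if_neg (by omega : ¬ k + 2 - 1 = 0)]
      have e1 : k + 2 - 1 = k + 1 := by omega
      have e2 : k + 1 - 1 = k := by omega
      have e3 : k + 2 - 2 = k := by omega
      rw [e1, e2, e3]
      rw [norm_numPow_sq, norm_term_sq a5 _ (by positivity),
        norm_sqrt_mul_sq _ (by positivity)]
      have e4 : ((k+2:ℕ):ℝ) = (k:ℝ) + 2 := by push_cast; ring
      have e5 : ((k+1:ℕ):ℝ) = (k:ℝ) + 1 := by push_cast; ring
      rw [e4, e5]
      ring
  have hL5' : ∑ j ∈ range (n+1),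
        (‖a5‖^2 * ((j:ℝ)^(2*p) * ((j:ℝ)*((j:ℝ)-1)))) * ‖x (j-2)‖^2
      ≤ ∑ j ∈ range (n+1),
          (‖a5‖^2 * (((j+2:ℕ):ℝ)^(2*p) * (((j+2:ℕ):ℝ)*(((j+2:ℕ):ℝ)-1)))) * ‖x j‖^2 := by
    refine sum_shift_down (n+1) 2 (fun k => ‖a5‖^2 * ((k:ℝ)^(2*p) * ((k:ℝ)*((k:ℝ)-1))))
      (fun k => ‖x k‖^2) (by omega) ?_ ?_ hw0
    · intro j hj
      interval_cases j <;> norm_num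
    · intro k
      rcases Nat.eq_zero_or_pos k with h | h
      · subst h; norm_num
      · have h1 : (1:ℝ) ≤ (k:ℝ) := by exact_mod_cast h
        have : (0:ℝ) ≤ (k:ℝ)*((k:ℝ)-1) := by nlinarith
        positivity
  have hL6 : normSq (numPow p (proj n (a6 • num (num x))))
      = ∑ j ∈ range (n+1), (‖a6‖^2 * ((j:ℝ)^(2*p) * (j:ℝ)^4)) * ‖x j‖^2 := by
    rw [hredL]
    refine Finset.sum_congr rfl fun j _ => ?_
    simp only [Pi.smul_apply, smul_eq_mul, num]
    rw [norm_numPow_sq]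
    rw [norm_mul, norm_mul, norm_mul, Complex.norm_natCast]
    ring
  -- norms of x
  have hNq : normSq (numPow p x) = ∑ j ∈ range (n+1), (j:ℝ)^(2*p) * ‖x j‖^2 := by
    rw [normSq]
    rw [tsum_eq_sum (s := range (n+1)) (f := fun j => ‖numPow p x j‖^2)]
    · refine Finset.sum_congr rfl fun j _ => ?_
      simp only [numPow]
      rw [norm_numPow_sq]
    · intro j hj
      have hjn : n < j := by simp only [Finset.mem_range] at hj; omega
      simp [numPow, hx j hjn]
  have hNx : normSq x = ∑ j ∈ range (n+1), ‖x j‖^2 := by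
    rw [normSq]
    exact tsum_eq_sum (s := range (n+1)) (fun j hj => by
      have hjn : n < j := by simp only [Finset.mem_range] at hj; omega
      simp [hx j hjn])
  -- merge into E
  have hmerge : ∑ j ∈ range (n+1),
        (-((j:ℝ)^(2*p) * dcoef (‖a1‖^2) (‖a2‖^2) (‖a3‖^2) (‖a4‖^2) (‖a5‖^2) (‖a6‖^2) (j:ℝ))
          * ‖x j‖^2)
      + (∑ j ∈ range (n+1), (|b1| * cc (2*p) j) * ‖x j‖^2
        + ∑ j ∈ range (n+1), (if j = 0 then 0 else |b1| * cc (2*p) (j-1)) * ‖x j‖^2)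
      + (∑ j ∈ range (n+1),
          (if 1 ≤ j then ‖a1‖^2 * (((j-1:ℕ):ℝ)^(2*p) * (((j-1:ℕ):ℝ)+1)) else 0) * ‖x j‖^2
        + ∑ j ∈ range (n+1), (‖a2‖^2 * (((j+1:ℕ):ℝ)^(2*p) * ((j+1:ℕ):ℝ))) * ‖x j‖^2
        + ∑ j ∈ range (n+1), (‖a3‖^2 * ((j:ℝ)^(2*p) * (j:ℝ)^2)) * ‖x j‖^2
        + ∑ j ∈ range (n+1),
            (if 2 ≤ j then ‖a4‖^2 * (((j-2:ℕ):ℝ)^(2*p)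
              * ((((j-2:ℕ):ℝ)+1)*(((j-2:ℕ):ℝ)+2))) else 0) * ‖x j‖^2
        + ∑ j ∈ range (n+1),
            (‖a5‖^2 * (((j+2:ℕ):ℝ)^(2*p) * (((j+2:ℕ):ℝ)*(((j+2:ℕ):ℝ)-1)))) * ‖x j‖^2
        + ∑ j ∈ range (n+1), (‖a6‖^2 * ((j:ℝ)^(2*p) * (j:ℝ)^4)) * ‖x j‖^2)
      = ∑ j ∈ range (n+1), E j * ‖x j‖^2 := by
    rw [← Finset.sum_add_distrib, ← Finset.sum_add_distrib, ← Finset.sum_add_distrib,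
      ← Finset.sum_add_distrib, ← Finset.sum_add_distrib, ← Finset.sum_add_distrib,
      ← Finset.sum_add_distrib, ← Finset.sum_add_distrib]
    refine Finset.sum_congr rfl fun j _ => ?_
    simp only [hEdef, Ecoef]
    ring
  -- final comparison
  have hfin : ∑ j ∈ range (n+1), E j * ‖x j‖^2
      ≤ -al * normSq (numPow p x) + be * (1 + normSq x) := by
    have h1 : ∑ j ∈ range (n+1), E j * ‖x j‖^2
        ≤ ∑ j ∈ range (n+1), (-al * (j:ℝ)^(2*p) + be) * ‖x j‖^2 :=
      Finset.sum_le_sum fun j _ => mul_le_mul_of_nonneg_right (hE j) (hw0 j)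
    have h2 : ∑ j ∈ range (n+1), (-al * (j:ℝ)^(2*p) + be) * ‖x j‖^2
        = -al * (∑ j ∈ range (n+1), (j:ℝ)^(2*p) * ‖x j‖^2)
          + be * (∑ j ∈ range (n+1), ‖x j‖^2) := by
      rw [Finset.mul_sum, Finset.mul_sum, ← Finset.sum_add_distrib]
      refine Finset.sum_congr rfl fun j _ => ?_
      ring
    rw [hNq, hNx]
    have h3 : be * (∑ j ∈ range (n+1), ‖x j‖^2)
        ≤ be * (1 + ∑ j ∈ range (n+1), ‖x j‖^2) := by
      have : (0:ℝ) ≤ 1 := by norm_num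
      nlinarith only [hbe0]
    linarith only [h1, h2.le, h2.ge, h3]
  -- put everything together
  rw [hRe, hL1, hL2, hL3, hL4, hL5, hL6]
  rw [hCross] at *
  calc (∑ j ∈ range (n+1),
        (-((j:ℝ)^(2*p) * dcoef (‖a1‖^2) (‖a2‖^2) (‖a3‖^2) (‖a4‖^2) (‖a5‖^2) (‖a6‖^2) (j:ℝ))
          * ‖x j‖^2)
      + ∑ k ∈ range n, 2*b1*cc (2*p) k * ((starRingEnd ℂ) (x (k+1)) * x k).re)
      + (∑ j ∈ range (n+1), (‖a1‖^2 * ((j:ℝ)^(2*p) * ((j:ℝ)+1))) * ‖x (j+1)‖^2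
        + ∑ j ∈ range (n+1), (‖a2‖^2 * ((j:ℝ)^(2*p) * (j:ℝ))) * ‖x (j-1)‖^2
        + ∑ j ∈ range (n+1), (‖a3‖^2 * ((j:ℝ)^(2*p) * (j:ℝ)^2)) * ‖x j‖^2
        + ∑ j ∈ range (n+1),
            (‖a4‖^2 * ((j:ℝ)^(2*p) * (((j:ℝ)+1)*((j:ℝ)+2)))) * ‖x (j+2)‖^2
        + ∑ j ∈ range (n+1), (‖a5‖^2 * ((j:ℝ)^(2*p) * ((j:ℝ)*((j:ℝ)-1)))) * ‖x (j-2)‖^2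
        + ∑ j ∈ range (n+1), (‖a6‖^2 * ((j:ℝ)^(2*p) * (j:ℝ)^4)) * ‖x j‖^2)
      ≤ ∑ j ∈ range (n+1), E j * ‖x j‖^2 := by
        rw [← hmerge]
        have hb1 := hL1'.le
        linarith only [hCrossBound, hCrossSplit, hL1'.le, hL1'.ge, hL2', hL4'.le, hL4'.ge, hL5']
    _ ≤ -al * normSq (numPow p x) + be * (1 + normSq x) := hfin

end QOsc
end
end

section
/- Let h be a separable complex Hilbert space and (Ω, F, P) a probability space. Let α and α_n (n ∈ ℕ) be h-valued random variables such that E‖α_n − α‖² → 0 as n → ∞, E‖α_n‖² = E‖α‖² = 1 for every n, and P(α = 0) = 0. Define π : h → h by π(x) = x/‖x‖ for x ≠ 0 and π(0) = 0. Then for every bounded continuous function f : h → ℝ, E[‖α_n‖² f(π(α_n))] → E[‖α‖² f(π(α))] as n → ∞; that is, the probability measures B ↦ E[‖α_n‖² 1_B(π(α_n))] on the Borel σ-algebra of h converge weakly to B ↦ E[‖α‖² 1_B(π(α))]. -/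
open Filter MeasureTheory
open scoped Classical ENNReal NNReal

/-- The normalization map `π : h → h`, `π(x) = x/‖x‖` for `x ≠ 0` and `π(0) = 0`. -/
noncomputable def normalizeVec {H : Type*} [NormedAddCommGroup H] [InnerProductSpace ℂ H]
    (x : H) : H :=
  if x = 0 then 0 else ((‖x‖ : ℂ))⁻¹ • x

section Aux

variable {H : Type*} [NormedAddCommGroup H] [InnerProductSpace ℂ H]

lemma continuousAt_normalizeVec {x : H} (hx : x ≠ 0) :
    ContinuousAt (normalizeVec : H → H) x := by
  have h1 : ContinuousAt (fun y : H => ((‖y‖ : ℂ))⁻¹ • y) x := by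
    refine ContinuousAt.smul ?_ continuousAt_id
    exact (Complex.continuous_ofReal.comp continuous_norm).continuousAt.inv₀
      (by simpa [Complex.ofReal_eq_zero, norm_eq_zero] using hx)
  refine h1.congr ?_
  have hmem : {y : H | y ≠ 0} ∈ nhds x :=
    isOpen_compl_singleton.mem_nhds (by simpa using hx)
  filter_upwards [hmem] with y hy
  simp [normalizeVec, hy]

lemma measurable_normalizeVec [MeasurableSpace H] [BorelSpace H]
    [SecondCountableTopology H] :
    Measurable (normalizeVec : H → H) := by
  unfold normalizeVec
  refine Measurable.ite ?_ measurable_const ?_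
  · have : {x : H | x = 0} = {(0 : H)} := by ext y; simp
    rw [this]
    exact measurableSet_singleton 0
  · exact ((Complex.measurable_ofReal.comp measurable_norm).inv).smul measurable_id

lemma rpow_two_eq (x : ℝ) : x ^ (2:ℝ) = x ^ 2 := by
  rw [← Real.rpow_natCast x 2]; norm_num

lemma abs_sq_sub_sq_le (x y : H) :
    |‖x‖ ^ 2 - ‖y‖ ^ 2| ≤ (‖x‖ + ‖y‖) * ‖x - y‖ := by
  have h1 : |‖x‖ ^ 2 - ‖y‖ ^ 2| = (‖x‖ + ‖y‖) * |‖x‖ - ‖y‖| := by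
    rw [← abs_of_nonneg (add_nonneg (norm_nonneg x) (norm_nonneg y)), ← abs_mul]
    congr 1
    ring
  rw [h1]
  exact mul_le_mul_of_nonneg_left (abs_norm_sub_norm_le x y)
    (add_nonneg (norm_nonneg x) (norm_nonneg y))

end Aux

/-- analytic core of the proof of Theorem 6. If `αₙ → α` in `L²`, all with
`E‖·‖² = 1`, and `P(α = 0) = 0`, then for every bounded continuous `f : h → ℝ` we have
`E[‖αₙ‖² f(π(αₙ))] → E[‖α‖² f(π(α))]`; i.e. the reweighted laws of `π(αₙ)` converge weakly
to the reweighted law of `π(α)`. -/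
theorem stmt13 {H : Type*} [NormedAddCommGroup H] [InnerProductSpace ℂ H]
    [CompleteSpace H] [TopologicalSpace.SeparableSpace H]
    {Ω : Type*} [MeasurableSpace Ω] (P : Measure Ω) [IsProbabilityMeasure P]
    (α : Ω → H) (αs : ℕ → Ω → H)
    (hα2 : MemLp α 2 P) (hαs2 : ∀ n, MemLp (αs n) 2 P)
    (hconv : Tendsto (fun n => ∫ ω, ‖αs n ω - α ω‖ ^ 2 ∂P) atTop (nhds 0))
    (hnorm : ∀ n, ∫ ω, ‖αs n ω‖ ^ 2 ∂P = 1)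
    (hnorm' : ∫ ω, ‖α ω‖ ^ 2 ∂P = 1)
    (hzero : P {ω | α ω = 0} = 0) :
    ∀ f : H → ℝ, Continuous f → (∃ M : ℝ, ∀ x : H, |f x| ≤ M) →
      Tendsto (fun n => ∫ ω, ‖αs n ω‖ ^ 2 * f (normalizeVec (αs n ω)) ∂P) atTop
        (nhds (∫ ω, ‖α ω‖ ^ 2 * f (normalizeVec (α ω)) ∂P)) := by
  intro f hfc hbdd
  obtain ⟨M₀, hM₀⟩ := hbdd
  set M : ℝ := max M₀ 0 with hMdef
  have hM : ∀ x : H, |f x| ≤ M := fun x => (hM₀ x).trans (le_max_left _ _)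
  have hM0 : 0 ≤ M := le_max_right _ _
  borelize H
  haveI : SecondCountableTopology H := UniformSpace.secondCountable_of_separable H
  -- a.e. nonvanishing of α
  have hne : ∀ᵐ ω ∂P, α ω ≠ 0 := by
    rw [ae_iff]
    simpa [not_not] using hzero
  -- integrability of squared norms
  have sqInt : ∀ (g : Ω → H), MemLp g 2 P → Integrable (fun ω => ‖g ω‖ ^ 2) P := by
    intro g hg
    have h := hg.integrable_norm_rpow two_ne_zero ENNReal.ofNat_ne_top
    have heq : (fun ω => ‖g ω‖ ^ (2 : ℝ≥0∞).toReal) = fun ω => ‖g ω‖ ^ 2 := by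
      funext ω
      rw [ENNReal.toReal_ofNat, show ((2 : ℝ)) = ((2 : ℕ) : ℝ) by norm_num, Real.rpow_natCast]
    rwa [heq] at h
  -- a.e. strong measurability of f ∘ π ∘ g
  have fm : ∀ (g : Ω → H), AEStronglyMeasurable g P →
      AEStronglyMeasurable (fun ω => f (normalizeVec (g ω))) P := by
    intro g hg
    have hg' : AEMeasurable g P := aestronglyMeasurable_iff_aemeasurable.mp hg
    exact ((hfc.measurable.comp measurable_normalizeVec).comp_aemeasurable hg').aestronglyMeasurable
  -- integrability of the main integrands
  have intg : ∀ (g : Ω → H), MemLp g 2 P →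
      Integrable (fun ω => ‖g ω‖ ^ 2 * f (normalizeVec (g ω))) P := by
    intro g hg
    have h := (sqInt g hg).bdd_mul (fm g hg.1)
      (Eventually.of_forall fun ω => by simpa [Real.norm_eq_abs] using hM (normalizeVec (g ω)))
    simpa [mul_comm] using h
  -- integrability of ‖α‖² f(π(αₙ))
  have intg2 : ∀ n, Integrable (fun ω => ‖α ω‖ ^ 2 * f (normalizeVec (αs n ω))) P := by
    intro n
    have h := (sqInt α hα2).bdd_mul (fm (αs n) (hαs2 n).1)
      (Eventually.of_forall fun ω => by simpa [Real.norm_eq_abs] using hM (normalizeVec (αs n ω)))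
    simpa [mul_comm] using h
  -- integrability of (‖αₙ‖² - ‖α‖²) f(π(αₙ))
  have intg3 : ∀ n,
      Integrable (fun ω => (‖αs n ω‖ ^ 2 - ‖α ω‖ ^ 2) * f (normalizeVec (αs n ω))) P := by
    intro n
    have h := ((sqInt (αs n) (hαs2 n)).sub (sqInt α hα2)).bdd_mul (fm (αs n) (hαs2 n).1)
      (Eventually.of_forall fun ω => by simpa [Real.norm_eq_abs] using hM (normalizeVec (αs n ω)))
    simpa [mul_comm] using h
  -- Part B: ∫ ‖α‖² f(π(αₙ)) → ∫ ‖α‖² f(π(α)), via subsequences and dominated convergence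
  have hB : Tendsto (fun n => ∫ ω, ‖α ω‖ ^ 2 * f (normalizeVec (αs n ω)) ∂P) atTop
      (nhds (∫ ω, ‖α ω‖ ^ 2 * f (normalizeVec (α ω)) ∂P)) := by
    apply tendsto_of_subseq_tendsto
    intro ns hns
    -- L² convergence of the subsequence, in eLpNorm form
    have hel : Tendsto (fun k => eLpNorm ((fun k => αs (ns k)) k - α) 2 P) atTop (nhds 0) := by
      have h1 : ∀ k, eLpNorm ((fun k => αs (ns k)) k - α) 2 P
          = (ENNReal.ofReal (∫ ω, ‖αs (ns k) ω - α ω‖ ^ 2 ∂P)) ^ (1 / 2 : ℝ) := by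
        intro k
        have hint : Integrable (fun ω => ‖αs (ns k) ω - α ω‖ ^ 2) P :=
          sqInt _ ((hαs2 (ns k)).sub hα2)
        rw [eLpNorm_eq_lintegral_rpow_enorm_toReal two_ne_zero ENNReal.ofNat_ne_top]
        rw [ENNReal.toReal_ofNat]
        congr 1
        rw [ofReal_integral_eq_lintegral_ofReal hint
          (Eventually.of_forall fun ω => by positivity)]
        refine lintegral_congr fun ω => ?_
        simp only [Pi.sub_apply]
        rw [← ofReal_norm,
          show (‖αs (ns k) ω - α ω‖ ^ 2 : ℝ) = ‖αs (ns k) ω - α ω‖ ^ (2:ℝ) by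
            rw [show ((2:ℝ)) = ((2:ℕ):ℝ) by norm_num, Real.rpow_natCast],
          ENNReal.ofReal_rpow_of_nonneg (norm_nonneg _) (by norm_num)]
      have h0 : Tendsto (fun k => ENNReal.ofReal (∫ ω, ‖αs (ns k) ω - α ω‖ ^ 2 ∂P)) atTop
          (nhds 0) := by
        have := (ENNReal.continuous_ofReal.tendsto 0).comp (hconv.comp hns)
        simpa [Function.comp_def] using this
      have h2 := ((ENNReal.continuous_rpow_const (y := (1/2 : ℝ))).tendsto (0 : ℝ≥0∞)).comp h0
      rw [funext h1]
      simpa [Function.comp_def, ENNReal.zero_rpow_of_pos (by norm_num : (0:ℝ) < 1/2)] using h2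
    have him : TendstoInMeasure P (fun k => αs (ns k)) atTop α :=
      tendstoInMeasure_of_tendsto_eLpNorm (two_ne_zero) (fun k => (hαs2 (ns k)).1) hα2.1 hel
    obtain ⟨ms, -, hae⟩ := him.exists_seq_tendsto_ae
    refine ⟨ms, ?_⟩
    apply tendsto_integral_of_dominated_convergence (fun ω => ‖α ω‖ ^ 2 * M)
    · exact fun i => (sqInt α hα2).1.mul (fm (αs (ns (ms i))) (hαs2 _).1)
    · exact (sqInt α hα2).mul_const M
    · intro i
      refine Eventually.of_forall fun ω => ?_
      rw [norm_mul, Real.norm_eq_abs, Real.norm_eq_abs, abs_of_nonneg (sq_nonneg (‖α ω‖))]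
      exact mul_le_mul_of_nonneg_left (hM _) (sq_nonneg _)
    · filter_upwards [hae, hne] with ω hω hω0
      have hc : ContinuousAt (fun y => f (normalizeVec y)) (α ω) :=
        hfc.continuousAt.comp (continuousAt_normalizeVec hω0)
      exact Tendsto.const_mul _ (hc.tendsto.comp hω)
  -- Part A: ∫ (‖αₙ‖² - ‖α‖²) f(π(αₙ)) → 0, via Cauchy-Schwarz
  have hA : Tendsto
      (fun n => ∫ ω, (‖αs n ω‖ ^ 2 - ‖α ω‖ ^ 2) * f (normalizeVec (αs n ω)) ∂P) atTop
      (nhds 0) := by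
    have hconj : Real.HolderConjugate 2 2 := Real.holderConjugate_iff.mpr ⟨one_lt_two, by norm_num⟩
    have hof2 : ENNReal.ofReal (2 : ℝ) = 2 := by
      rw [show ((2:ℝ)) = ((2:ℕ):ℝ) by norm_num, ENNReal.ofReal_natCast]
      norm_num
    have hbound : ∀ n,
        ‖∫ ω, (‖αs n ω‖ ^ 2 - ‖α ω‖ ^ 2) * f (normalizeVec (αs n ω)) ∂P‖
          ≤ (M * 2) * Real.sqrt (∫ ω, ‖αs n ω - α ω‖ ^ 2 ∂P) := by
      intro n
      have hgmem : MemLp (fun ω => ‖αs n ω‖ + ‖α ω‖) (ENNReal.ofReal (2:ℝ)) P := by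
        rw [hof2]; exact ((hαs2 n).norm.add hα2.norm)
      have hdmem : MemLp (fun ω => ‖αs n ω - α ω‖) (ENNReal.ofReal (2:ℝ)) P := by
        rw [hof2]; exact ((hαs2 n).sub hα2).norm
      -- integrability of the product (for the monotonicity step)
      have hprod : Integrable (fun ω => (‖αs n ω‖ + ‖α ω‖) * ‖αs n ω - α ω‖) P := by
        have h1 : MemLp ((fun ω => (‖αs n ω‖ + ‖α ω‖)) • (fun ω => ‖αs n ω - α ω‖)) 1 P := by
          refine MemLp.smul (𝕜 := ℝ) ?_ ?_ (p := 2) (q := 2) (r := 1) (hpqr := ?_)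
          · exact ((hαs2 n).sub hα2).norm
          · exact ((hαs2 n).norm.add hα2.norm)
          · exact ENNReal.holderConjugate_iff.mpr ENNReal.inv_two_add_inv_two
        have h2 := memLp_one_iff_integrable.mp h1
        simpa [smul_eq_mul, Pi.mul_def] using h2
      -- bound on the first Hölder factor
      have h4 : ∫ ω, (‖αs n ω‖ + ‖α ω‖) ^ (2:ℝ) ∂P ≤ 4 := by
        have hle : ∀ ω, (‖αs n ω‖ + ‖α ω‖) ^ (2:ℝ) ≤ 2 * ‖αs n ω‖ ^ 2 + 2 * ‖α ω‖ ^ 2 := by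
          intro ω
          rw [rpow_two_eq]
          nlinarith [norm_nonneg (αs n ω), norm_nonneg (α ω),
            sq_nonneg (‖αs n ω‖ - ‖α ω‖)]
        calc ∫ ω, (‖αs n ω‖ + ‖α ω‖) ^ (2:ℝ) ∂P
            ≤ ∫ ω, (2 * ‖αs n ω‖ ^ 2 + 2 * ‖α ω‖ ^ 2) ∂P := by
              refine integral_mono_of_nonneg
                (Eventually.of_forall fun ω => Real.rpow_nonneg (by positivity) _)
                (((sqInt _ (hαs2 n)).const_mul 2).add ((sqInt α hα2).const_mul 2))
                (Eventually.of_forall hle)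
          _ = 4 := by
              rw [integral_add ((sqInt _ (hαs2 n)).const_mul 2) ((sqInt α hα2).const_mul 2),
                integral_const_mul, integral_const_mul, hnorm n, hnorm']
              norm_num
      have h0 : (0:ℝ) ≤ ∫ ω, (‖αs n ω‖ + ‖α ω‖) ^ (2:ℝ) ∂P :=
        integral_nonneg fun ω => Real.rpow_nonneg (by positivity) _
      have h5 : (∫ ω, (‖αs n ω‖ + ‖α ω‖) ^ (2:ℝ) ∂P) ^ (1/2:ℝ) ≤ 2 := by
        calc (∫ ω, (‖αs n ω‖ + ‖α ω‖) ^ (2:ℝ) ∂P) ^ (1/2:ℝ)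
            ≤ (4:ℝ) ^ (1/2:ℝ) := Real.rpow_le_rpow h0 h4 (by norm_num)
          _ = 2 := by
              rw [show (4:ℝ) = 2 ^ (2:ℕ) by norm_num, ← Real.rpow_natCast 2 2,
                ← Real.rpow_mul (by norm_num : (0:ℝ) ≤ 2)]
              norm_num
      have hfactor2 : (∫ ω, ‖αs n ω - α ω‖ ^ (2:ℝ) ∂P) ^ (1/2:ℝ)
          = Real.sqrt (∫ ω, ‖αs n ω - α ω‖ ^ 2 ∂P) := by
        rw [Real.sqrt_eq_rpow]
        congr 1
        exact integral_congr_ae (Eventually.of_forall fun ω => rpow_two_eq _)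
      calc ‖∫ ω, (‖αs n ω‖ ^ 2 - ‖α ω‖ ^ 2) * f (normalizeVec (αs n ω)) ∂P‖
          ≤ ∫ ω, ‖(‖αs n ω‖ ^ 2 - ‖α ω‖ ^ 2) * f (normalizeVec (αs n ω))‖ ∂P :=
            norm_integral_le_integral_norm _
        _ ≤ ∫ ω, M * ((‖αs n ω‖ + ‖α ω‖) * ‖αs n ω - α ω‖) ∂P := by
            refine integral_mono_of_nonneg (Eventually.of_forall fun ω => norm_nonneg _)
              (hprod.const_mul M) (Eventually.of_forall fun ω => ?_)
            dsimp only
            rw [norm_mul, Real.norm_eq_abs, Real.norm_eq_abs]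
            calc |‖αs n ω‖ ^ 2 - ‖α ω‖ ^ 2| * |f (normalizeVec (αs n ω))|
                ≤ ((‖αs n ω‖ + ‖α ω‖) * ‖αs n ω - α ω‖) * M :=
                  mul_le_mul (abs_sq_sub_sq_le _ _) (hM _) (abs_nonneg _) (by positivity)
              _ = M * ((‖αs n ω‖ + ‖α ω‖) * ‖αs n ω - α ω‖) := by ring
        _ = M * ∫ ω, (‖αs n ω‖ + ‖α ω‖) * ‖αs n ω - α ω‖ ∂P := integral_const_mul M _
        _ ≤ M * ((∫ ω, (‖αs n ω‖ + ‖α ω‖) ^ (2:ℝ) ∂P) ^ (1/2:ℝ)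
              * (∫ ω, ‖αs n ω - α ω‖ ^ (2:ℝ) ∂P) ^ (1/2:ℝ)) := by
            refine mul_le_mul_of_nonneg_left ?_ hM0
            exact integral_mul_le_Lp_mul_Lq_of_nonneg hconj
              (Eventually.of_forall fun ω => by positivity)
              (Eventually.of_forall fun ω => norm_nonneg _) hgmem hdmem
        _ ≤ M * (2 * Real.sqrt (∫ ω, ‖αs n ω - α ω‖ ^ 2 ∂P)) := by
            refine mul_le_mul_of_nonneg_left ?_ hM0
            rw [hfactor2]
            exact mul_le_mul_of_nonneg_right h5 (Real.sqrt_nonneg _)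
        _ = (M * 2) * Real.sqrt (∫ ω, ‖αs n ω - α ω‖ ^ 2 ∂P) := by ring
    have htend : Tendsto (fun n => (M * 2) * Real.sqrt (∫ ω, ‖αs n ω - α ω‖ ^ 2 ∂P)) atTop
        (nhds 0) := by
      have := ((Real.continuous_sqrt.tendsto 0).comp hconv).const_mul (M * 2)
      simpa [Function.comp] using this
    exact squeeze_zero_norm hbound htend
  -- combine
  have keyEq : ∀ n, ∫ ω, ‖αs n ω‖ ^ 2 * f (normalizeVec (αs n ω)) ∂P
      = (∫ ω, (‖αs n ω‖ ^ 2 - ‖α ω‖ ^ 2) * f (normalizeVec (αs n ω)) ∂P)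
        + ∫ ω, ‖α ω‖ ^ 2 * f (normalizeVec (αs n ω)) ∂P := by
    intro n
    rw [← integral_add (intg3 n) (intg2 n)]
    congr 1
    funext ω
    ring
  have := hA.add hB
  rw [zero_add] at this
  simpa only [funext keyEq] using this
end
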